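/- arXiv:2311.17566 — 2 statements merged into one kernel-verified Lean document; each statement's English description precedes it below -/
import Mathlib

section
/- In the skew-product setting, let m be a σ-ergodic measure on Ω and let b₁,b₂:Ω→ℝ be bounded m-measurable equilibria with b₁(ω)<b₂(ω) for m-a.e. ω∈Ω. Assume m({ω∈Ω : x↦𝔥(ω,x) is concave})=1 and m({ω∈Ω : 𝔥_x(ω,b₁(ω))>𝔥_x(ω,b₂(ω))})>0. Then ∫_Ω 𝔥_x(ω,b₁(ω))dm>0 and ∫_Ω 𝔥_x(ω,b₂(ω))dm<0. In particular, if m({ω : x↦𝔥(ω,x) is concave})=1 and every pair of bounded m-measurable equilibria c₁,c₂ with c₁<c₂ m-a.e. satisfies m({ω : 𝔥_x(ω,c₁(ω))>𝔥_x(ω,c₂(ω))})>0, then there do not exist three bounded m-measurable equilibria which are pairwise strictly ordered m-a.e. -/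
open Set Filter Topology MeasureTheory

/-- `σ` is a global continuous flow on `Ω`. -/
def IsFlow {Ω : Type*} [TopologicalSpace Ω] (σ : ℝ → Ω → Ω) : Prop :=
  Continuous (fun p : ℝ × Ω => σ p.1 p.2) ∧ (∀ ω, σ 0 ω = ω) ∧
    ∀ s t : ℝ, ∀ ω, σ (s + t) ω = σ s (σ t ω)

/-- `m` is a `σ`-ergodic Borel probability measure on `Ω`. -/
def IsErgodicMeas {Ω : Type*} [MeasurableSpace Ω] (σ : ℝ → Ω → Ω)
    (m : MeasureTheory.Measure Ω) : Prop :=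
  MeasureTheory.IsProbabilityMeasure m ∧
  (∀ t : ℝ, MeasureTheory.MeasurePreserving (σ t) m m) ∧
  ∀ A : Set Ω, MeasurableSet A → (∀ t : ℝ, σ t ⁻¹' A = A) → m A = 0 ∨ m A = 1

/-- `b : Ω → ℝ` is an equilibrium for the skew-product flow induced by `H`:
for every `ω`, `t ↦ b(ω·t)` solves `x' = H(ω·t, x)`. -/
def IsEquilibrium {Ω : Type*} (σ : ℝ → Ω → Ω) (H : Ω → ℝ → ℝ) (b : Ω → ℝ) : Prop :=
  ∀ ω : Ω, ∀ t : ℝ, HasDerivAt (fun s => b (σ s ω)) (H (σ t ω) (b (σ t ω))) t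

/-- `h` is concave. -/
def ConcaveFn (h : ℝ → ℝ) : Prop :=
  ∀ x₁ x₂ α : ℝ, 0 ≤ α → α ≤ 1 →
    α * h x₁ + (1 - α) * h x₂ ≤ h (α * x₁ + (1 - α) * x₂)

/-- `ξ` solves `x' = h(t,x)` on the set `I`. -/
def IsSolOn (h : ℝ → ℝ → ℝ) (ξ : ℝ → ℝ) (I : Set ℝ) : Prop :=
  ∀ t ∈ I, HasDerivAt ξ (h t (ξ t)) t

/-- `ξ` is a globally defined bounded solution of `x' = h(t,x)`. -/
def IsBoundedSol (h : ℝ → ℝ → ℝ) (ξ : ℝ → ℝ) : Prop :=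
  (∀ t : ℝ, HasDerivAt ξ (h t (ξ t)) t) ∧ ∃ C : ℝ, ∀ t : ℝ, |ξ t| ≤ C

/-- Two globally defined functions are uniformly separated. -/
def UnifSep (b₁ b₂ : ℝ → ℝ) : Prop := ∃ d > 0, ∀ t : ℝ, d ≤ |b₁ t - b₂ t|

/-- `b` is a hyperbolic attractive solution of `x' = h(t,x)` (with `hx = h_x`). -/
def IsHypAttr (h hx : ℝ → ℝ → ℝ) (b : ℝ → ℝ) : Prop :=
  IsBoundedSol h b ∧ ∃ k ≥ (1:ℝ), ∃ γ > (0:ℝ), ∀ s t : ℝ, s ≤ t →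
    Real.exp (∫ r in s..t, hx r (b r)) ≤ k * Real.exp (-γ * (t - s))

/-- `b` is a hyperbolic repulsive solution of `x' = h(t,x)` (with `hx = h_x`). -/
def IsHypRep (h hx : ℝ → ℝ → ℝ) (b : ℝ → ℝ) : Prop :=
  IsBoundedSol h b ∧ ∃ k ≥ (1:ℝ), ∃ γ > (0:ℝ), ∀ s t : ℝ, t ≤ s →
    Real.exp (∫ r in s..t, hx r (b r)) ≤ k * Real.exp (γ * (t - s))

/-- `b` is a hyperbolic solution of `x' = h(t,x)`. -/
def IsHypSol (h hx : ℝ → ℝ → ℝ) (b : ℝ → ℝ) : Prop :=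
  IsHypAttr h hx b ∨ IsHypRep h hx b

/-- `b` determines an attractive hyperbolic copy of the base over `S ⊆ Ω`. -/
def AttrCopyOn {Ω : Type*} [TopologicalSpace Ω] (σ : ℝ → Ω → Ω) (H Hx : Ω → ℝ → ℝ)
    (S : Set Ω) (b : Ω → ℝ) : Prop :=
  ContinuousOn b S ∧
  (∀ ω ∈ S, ∀ t : ℝ, HasDerivAt (fun s => b (σ s ω)) (H (σ t ω) (b (σ t ω))) t) ∧
  ∃ k ≥ (1:ℝ), ∃ γ > (0:ℝ), ∀ ω ∈ S, ∀ t ≥ (0:ℝ),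
    Real.exp (∫ s in (0:ℝ)..t, Hx (σ s ω) (b (σ s ω))) ≤ k * Real.exp (-γ * t)

/-- `b` determines a repulsive hyperbolic copy of the base over `S ⊆ Ω`. -/
def RepCopyOn {Ω : Type*} [TopologicalSpace Ω] (σ : ℝ → Ω → Ω) (H Hx : Ω → ℝ → ℝ)
    (S : Set Ω) (b : Ω → ℝ) : Prop :=
  ContinuousOn b S ∧
  (∀ ω ∈ S, ∀ t : ℝ, HasDerivAt (fun s => b (σ s ω)) (H (σ t ω) (b (σ t ω))) t) ∧
  ∃ k ≥ (1:ℝ), ∃ γ > (0:ℝ), ∀ ω ∈ S, ∀ t ≤ (0:ℝ),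
    Real.exp (∫ s in (0:ℝ)..t, Hx (σ s ω) (b (σ s ω))) ≤ k * Real.exp (γ * t)

/-- `K` is a compact invariant subset of `Ω × ℝ` projecting onto `Ω`. -/
def InvCompactGraph {Ω : Type*} [TopologicalSpace Ω] (σ : ℝ → Ω → Ω) (H : Ω → ℝ → ℝ)
    (K : Set (Ω × ℝ)) : Prop :=
  IsCompact K ∧ (∀ ω : Ω, ∃ x : ℝ, (ω, x) ∈ K) ∧
  ∀ p ∈ K, ∃ ξ : ℝ → ℝ, ξ 0 = p.2 ∧
    (∀ t : ℝ, HasDerivAt ξ (H (σ t p.1) (ξ t)) t) ∧ ∀ t : ℝ, (σ t p.1, ξ t) ∈ K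

/-- `K₁ < K₂` as subsets of `Ω × ℝ`. -/
def OrderedSets {Ω : Type*} (K₁ K₂ : Set (Ω × ℝ)) : Prop :=
  ∀ (ω : Ω) (x₁ x₂ : ℝ), (ω, x₁) ∈ K₁ → (ω, x₂) ∈ K₂ → x₁ < x₂

section ConcaveAux

open Set

lemma concaveFn_concaveOn {f : ℝ → ℝ} (hf : ConcaveFn f) : ConcaveOn ℝ Set.univ f := by
  refine ⟨convex_univ, ?_⟩
  intro x _ y _ a b ha hb hab
  have hb' : b = 1 - a := by linarith
  have := hf x y a ha (by linarith)
  simpa [smul_eq_mul, hb'] using this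

lemma affine_of_slope_eq_left {h hx : ℝ → ℝ} (hc : ConcaveOn ℝ Set.univ h)
    (hd : ∀ x, HasDerivAt h (hx x) x) {x₁ x₂ : ℝ} (h12 : x₁ < x₂)
    (hs : slope h x₁ x₂ = hx x₁) : hx x₂ = hx x₁ := by
  have haff : ∀ y ∈ Icc x₁ x₂, h y = h x₁ + hx x₁ * (y - x₁) := by
    intro y hy
    rcases eq_or_lt_of_le hy.1 with rfl | hy1
    · simp
    · rcases eq_or_lt_of_le hy.2 with rfl | hy2
      · rw [slope_def_field, div_eq_iff (sub_ne_zero.mpr h12.ne')] at hs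
        linarith
      · have hub : slope h x₁ y ≤ hx x₁ :=
          hc.slope_le_of_hasDerivAt (mem_univ _) (mem_univ _) hy1 (hd x₁)
        have hlb : slope h x₁ x₂ ≤ slope h x₁ y := by
          have hA := hc.slope_anti (mem_univ x₁)
          exact hA ⟨mem_univ _, by simp [ne_of_gt hy1]⟩
            ⟨mem_univ _, by simp [ne_of_gt (hy1.trans hy2)]⟩ hy2.le
        have heq : slope h x₁ y = hx x₁ := le_antisymm hub (hs ▸ hlb)
        rw [slope_def_field, div_eq_iff (sub_ne_zero.mpr hy1.ne')] at heq
        linarith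
  have hmem : x₂ ∈ Icc x₁ x₂ := ⟨h12.le, le_rfl⟩
  have hud : UniqueDiffWithinAt ℝ (Icc x₁ x₂) x₂ := (uniqueDiffOn_Icc h12) x₂ hmem
  have hder1 : HasDerivWithinAt (fun y => h y - (h x₁ + hx x₁ * (y - x₁)))
      (hx x₂ - hx x₁) (Icc x₁ x₂) x₂ := by
    have h2 : HasDerivAt (fun y : ℝ => h x₁ + hx x₁ * (y - x₁)) (hx x₁) x₂ := by
      simpa using (((hasDerivAt_id x₂).sub_const x₁).const_mul (hx x₁)).const_add (h x₁)
    exact ((hd x₂).sub h2).hasDerivWithinAt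
  have hder0 : HasDerivWithinAt (fun y => h y - (h x₁ + hx x₁ * (y - x₁)))
      0 (Icc x₁ x₂) x₂ := by
    refine (hasDerivWithinAt_const x₂ (Icc x₁ x₂) (0:ℝ)).congr ?_ ?_
    · intro y hy; rw [haff y hy]; ring
    · rw [haff x₂ hmem]; ring
  have e1 := hder1.derivWithin hud
  have e0 := hder0.derivWithin hud
  have : hx x₂ - hx x₁ = 0 := by rw [← e1, e0]
  linarith

lemma affine_of_slope_eq_right {h hx : ℝ → ℝ} (hc : ConcaveOn ℝ Set.univ h)
    (hd : ∀ x, HasDerivAt h (hx x) x) {x₁ x₂ : ℝ} (h12 : x₁ < x₂)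
    (hs : slope h x₁ x₂ = hx x₂) : hx x₁ = hx x₂ := by
  have haff : ∀ y ∈ Icc x₁ x₂, h y = h x₂ + hx x₂ * (y - x₂) := by
    intro y hy
    rcases eq_or_lt_of_le hy.2 with rfl | hy2
    · simp
    · rcases eq_or_lt_of_le hy.1 with rfl | hy1
      · rw [slope_def_field, div_eq_iff (sub_ne_zero.mpr h12.ne')] at hs
        linarith
      · have hub : hx x₂ ≤ slope h y x₂ :=
          hc.le_slope_of_hasDerivAt (mem_univ _) (mem_univ _) hy2 (hd x₂)
        have hlb : slope h y x₂ ≤ slope h x₁ x₂ := by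
          have hA := hc.slope_anti (mem_univ x₂)
          have := hA ⟨mem_univ _, by simp [ne_of_lt (hy1.trans hy2)]⟩
            ⟨mem_univ _, by simp [ne_of_lt hy2]⟩ hy1.le
          rwa [slope_comm h x₂ y, slope_comm h x₂ x₁] at this
        have heq : slope h y x₂ = hx x₂ := le_antisymm (hs ▸ hlb) hub
        rw [slope_def_field, div_eq_iff (sub_ne_zero.mpr hy2.ne')] at heq
        linarith
  have hmem : x₁ ∈ Icc x₁ x₂ := ⟨le_rfl, h12.le⟩
  have hud : UniqueDiffWithinAt ℝ (Icc x₁ x₂) x₁ := (uniqueDiffOn_Icc h12) x₁ hmem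
  have hder1 : HasDerivWithinAt (fun y => h y - (h x₂ + hx x₂ * (y - x₂)))
      (hx x₁ - hx x₂) (Icc x₁ x₂) x₁ := by
    have h2 : HasDerivAt (fun y : ℝ => h x₂ + hx x₂ * (y - x₂)) (hx x₂) x₁ := by
      simpa using (((hasDerivAt_id x₁).sub_const x₂).const_mul (hx x₂)).const_add (h x₂)
    exact ((hd x₁).sub h2).hasDerivWithinAt
  have hder0 : HasDerivWithinAt (fun y => h y - (h x₂ + hx x₂ * (y - x₂)))
      0 (Icc x₁ x₂) x₁ := by
    refine (hasDerivWithinAt_const x₁ (Icc x₁ x₂) (0:ℝ)).congr ?_ ?_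
    · intro y hy; rw [haff y hy]; ring
    · rw [haff x₁ hmem]; ring
  have e1 := hder1.derivWithin hud
  have e0 := hder0.derivWithin hud
  have : hx x₁ - hx x₂ = 0 := by rw [← e1, e0]
  linarith

lemma slope_strict_of_deriv_ne {h hx : ℝ → ℝ} (hc : ConcaveOn ℝ Set.univ h)
    (hd : ∀ x, HasDerivAt h (hx x) x) {x₁ x₂ : ℝ} (h12 : x₁ < x₂)
    (hlt : hx x₂ < hx x₁) :
    hx x₂ < slope h x₁ x₂ ∧ slope h x₁ x₂ < hx x₁ := by
  have hle1 := hc.slope_le_of_hasDerivAt (mem_univ x₁) (mem_univ x₂) h12 (hd x₁)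
  have hle2 := hc.le_slope_of_hasDerivAt (mem_univ x₁) (mem_univ x₂) h12 (hd x₂)
  constructor
  · rcases lt_or_eq_of_le hle2 with hlt' | heq'
    · exact hlt'
    · have := affine_of_slope_eq_right hc hd h12 heq'.symm
      linarith
  · rcases lt_or_eq_of_le hle1 with hlt' | heq'
    · exact hlt'
    · have := affine_of_slope_eq_left hc hd h12 heq'
      linarith

end ConcaveAux

theorem stmt8_pair {Ω : Type*} [MetricSpace Ω] [CompactSpace Ω]
    [MeasurableSpace Ω] [BorelSpace Ω]
    (σ : ℝ → Ω → Ω) (hσ : IsFlow σ)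
    (H Hx : Ω → ℝ → ℝ)
    (hHc : Continuous fun p : Ω × ℝ => H p.1 p.2)
    (hHxc : Continuous fun p : Ω × ℝ => Hx p.1 p.2)
    (hder : ∀ ω x, HasDerivAt (H ω) (Hx ω x) x)
    (m : MeasureTheory.Measure Ω) (herg : IsErgodicMeas σ m)
    (b₁ b₂ : Ω → ℝ) (hm₁ : AEMeasurable b₁ m) (hm₂ : AEMeasurable b₂ m)
    (hbd₁ : ∃ C, ∀ ω, |b₁ ω| ≤ C) (hbd₂ : ∃ C, ∀ ω, |b₂ ω| ≤ C)
    (heq₁ : IsEquilibrium σ H b₁) (heq₂ : IsEquilibrium σ H b₂)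
    (hlt : ∀ᵐ ω ∂m, b₁ ω < b₂ ω)
    (hconc : m {ω | ConcaveFn (H ω)} = 1)
    (hpos : 0 < m {ω | Hx ω (b₂ ω) < Hx ω (b₁ ω)}) :
    (0 < ∫ ω, Hx ω (b₁ ω) ∂m) ∧ (∫ ω, Hx ω (b₂ ω) ∂m) < 0 := by
  classical
  haveI : IsProbabilityMeasure m := herg.1
  obtain ⟨-, hmp, -⟩ := herg
  obtain ⟨C₁, hC₁⟩ := hbd₁
  obtain ⟨C₂, hC₂⟩ := hbd₂
  set C : ℝ := max (max C₁ C₂) 0 with hCdef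
  have hC0 : 0 ≤ C := le_max_right _ _
  have hmem₁ : ∀ ω, b₁ ω ∈ Set.Icc (-C) C := by
    intro ω
    have h : |b₁ ω| ≤ C := (hC₁ ω).trans ((le_max_left C₁ C₂).trans (le_max_left (max C₁ C₂) 0))
    exact Set.mem_Icc.mpr (abs_le.mp h)
  have hmem₂ : ∀ ω, b₂ ω ∈ Set.Icc (-C) C := by
    intro ω
    have h : |b₂ ω| ≤ C := (hC₂ ω).trans ((le_max_right C₁ C₂).trans (le_max_left (max C₁ C₂) 0))
    exact Set.mem_Icc.mpr (abs_le.mp h)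
  -- bound on Hx on the compact strip
  have hK : IsCompact ((Set.univ : Set Ω) ×ˢ Set.Icc (-C) C) :=
    isCompact_univ.prod isCompact_Icc
  obtain ⟨M₀, hM₀⟩ := hK.exists_bound_of_continuousOn hHxc.continuousOn
  set M : ℝ := max M₀ 0 with hMdef
  have hM0 : 0 ≤ M := le_max_right _ _
  have hM : ∀ θ x, x ∈ Set.Icc (-C) C → |Hx θ x| ≤ M := by
    intro θ x hx
    have := hM₀ (θ, x) ⟨Set.mem_univ _, hx⟩
    rw [Real.norm_eq_abs] at this
    exact this.trans (le_max_left _ _)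
  -- slope bound for H via MVT
  have hslope : ∀ θ x y, x ∈ Set.Icc (-C) C → y ∈ Set.Icc (-C) C → x < y →
      |(H θ y - H θ x) / (y - x)| ≤ M := by
    intro θ x y hx hy hxy
    obtain ⟨c, hc, hceq⟩ := exists_hasDerivAt_eq_slope (H θ) (Hx θ) hxy
      (fun z _ => (hder θ z).continuousAt.continuousWithinAt) (fun z _ => hder θ z)
    rw [← hceq]
    exact hM θ c ⟨hx.1.trans hc.1.le, hc.2.le.trans hy.2⟩
  have hHlip' : ∀ θ x y, x ∈ Set.Icc (-C) C → y ∈ Set.Icc (-C) C →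
      |H θ x - H θ y| ≤ M * |x - y| := by
    intro θ x y hx hy
    rcases lt_trichotomy x y with hxy | rfl | hxy
    · have h1 := hslope θ x y hx hy hxy
      rw [abs_div, div_le_iff₀ (abs_pos.mpr (sub_ne_zero.mpr hxy.ne'))] at h1
      rw [abs_sub_comm, abs_sub_comm x y]
      exact h1
    · simp
    · have h1 := hslope θ y x hy hx hxy
      rw [abs_div, div_le_iff₀ (abs_pos.mpr (sub_ne_zero.mpr hxy.ne'))] at h1
      exact h1
  have hlip : ∀ θ, LipschitzOnWith (Real.toNNReal M) (H θ) (Set.Icc (-C) C) := by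
    intro θ
    rw [lipschitzOnWith_iff_dist_le_mul]
    intro x hx y hy
    rw [Real.dist_eq, Real.dist_eq, Real.coe_toNNReal M hM0]
    exact hHlip' θ x y hx hy
  -- orbit positivity
  have key3 : ∀ ω, b₁ ω < b₂ ω → ∀ t, b₁ (σ t ω) < b₂ (σ t ω) := by
    intro ω hω
    have hcont₁ : Continuous fun s => b₁ (σ s ω) :=
      continuous_iff_continuousAt.mpr fun t => (heq₁ ω t).continuousAt
    have hcont₂ : Continuous fun s => b₂ (σ s ω) :=
      continuous_iff_continuousAt.mpr fun t => (heq₂ ω t).continuousAt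
    have hne : ∀ t, b₁ (σ t ω) ≠ b₂ (σ t ω) := by
      intro t₀ heqx
      have habmem : t₀ ∈ Set.Ioo (min t₀ 0 - 1) (max t₀ 0 + 1) :=
        ⟨by have := min_le_left t₀ 0; linarith, by have := le_max_left t₀ 0; linarith⟩
      have h0mem : (0:ℝ) ∈ Set.Icc (min t₀ 0 - 1) (max t₀ 0 + 1) :=
        ⟨by have := min_le_right t₀ 0; linarith, by have := le_max_right t₀ 0; linarith⟩
      have heq0 := ODE_solution_unique_of_mem_Icc
        (v := fun t x => H (σ t ω) x) (s := fun _ => Set.Icc (-C) C)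
        (K := Real.toNNReal M) (f := fun s => b₁ (σ s ω)) (g := fun s => b₂ (σ s ω))
        (fun t _ => hlip (σ t ω)) habmem
        hcont₁.continuousOn (fun t _ => heq₁ ω t) (fun t _ => hmem₁ (σ t ω))
        hcont₂.continuousOn (fun t _ => heq₂ ω t) (fun t _ => hmem₂ (σ t ω))
        heqx h0mem
      have heq0' : b₁ (σ 0 ω) = b₂ (σ 0 ω) := heq0
      rw [hσ.2.1 ω] at heq0'
      exact (ne_of_lt hω) heq0'
    intro t
    by_contra hcon
    push_neg at hcon
    have hlt' : b₂ (σ t ω) - b₁ (σ t ω) < 0 := by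
      rcases lt_or_eq_of_le hcon with h | h
      · linarith
      · exact absurd h.symm (hne t)
    have hw0 : 0 < b₂ (σ 0 ω) - b₁ (σ 0 ω) := by rw [hσ.2.1 ω]; linarith
    have h0m : (0:ℝ) ∈ Set.uIcc (b₂ (σ t ω) - b₁ (σ t ω)) (b₂ (σ 0 ω) - b₁ (σ 0 ω)) :=
      Set.mem_uIcc.mpr (Or.inl ⟨hlt'.le, hw0.le⟩)
    obtain ⟨s, -, hs⟩ := intermediate_value_uIcc
      ((hcont₂.sub hcont₁).continuousOn
        (s := Set.uIcc t 0)) h0m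
    exact hne s ((show b₂ (σ s ω) = b₁ (σ s ω) by simpa [sub_eq_zero] using hs)).symm
  -- the functions q and g
  set q : Ω → ℝ := fun θ => (H θ (b₂ θ) - H θ (b₁ θ)) / (b₂ θ - b₁ θ) with hqdef
  set g : Ω → ℝ := fun θ => Real.log (b₂ θ - b₁ θ) with hgdef
  have qbound : ∀ θ, b₁ θ < b₂ θ → |q θ| ≤ M :=
    fun θ h => hslope θ _ _ (hmem₁ θ) (hmem₂ θ) h
  have gderiv : ∀ ω, b₁ ω < b₂ ω → ∀ t,
      HasDerivAt (fun s => g (σ s ω)) (q (σ t ω)) t := by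
    intro ω hω t
    have hd : HasDerivAt (fun s => b₂ (σ s ω) - b₁ (σ s ω))
        (H (σ t ω) (b₂ (σ t ω)) - H (σ t ω) (b₁ (σ t ω))) t := (heq₂ ω t).sub (heq₁ ω t)
    exact hd.log (ne_of_gt (sub_pos.mpr (key3 ω hω t)))
  have gbound : ∀ ω, b₁ ω < b₂ ω → ∀ T, |g (σ T ω) - g ω| ≤ M * |T| := by
    intro ω hω T
    have hg0 : g (σ 0 ω) = g ω := by rw [hσ.2.1 ω]
    have hcg : ∀ (a b : ℝ), ContinuousOn (fun s => g (σ s ω)) (Set.Icc a b) :=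
      fun a b => fun s _ => ((gderiv ω hω s).continuousAt).continuousWithinAt
    rcases lt_trichotomy T 0 with hT | rfl | hT
    · obtain ⟨c, -, hceq⟩ := exists_hasDerivAt_eq_slope (fun s => g (σ s ω))
        (fun s => q (σ s ω)) hT (hcg T 0) (fun s _ => gderiv ω hω s)
      have hb := qbound (σ c ω) (key3 ω hω c)
      rw [hceq, abs_div, div_le_iff₀ (abs_pos.mpr (sub_ne_zero.mpr hT.ne'))] at hb
      rw [← hg0, abs_sub_comm]
      calc |g (σ 0 ω) - g (σ T ω)| ≤ M * |0 - T| := hb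
        _ = M * |T| := by rw [zero_sub, abs_neg]
    · rw [hg0]; simp
    · obtain ⟨c, -, hceq⟩ := exists_hasDerivAt_eq_slope (fun s => g (σ s ω))
        (fun s => q (σ s ω)) hT (hcg 0 T) (fun s _ => gderiv ω hω s)
      have hb := qbound (σ c ω) (key3 ω hω c)
      rw [hceq, abs_div, div_le_iff₀ (abs_pos.mpr (sub_ne_zero.mpr hT.ne'))] at hb
      rw [← hg0]
      calc |g (σ T ω) - g (σ 0 ω)| ≤ M * |T - 0| := hb
        _ = M * |T| := by rw [sub_zero]
  -- measurability
  have hHb₁ : AEMeasurable (fun ω => H ω (b₁ ω)) m :=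
    hHc.measurable.comp_aemeasurable (aemeasurable_id.prodMk hm₁)
  have hHb₂ : AEMeasurable (fun ω => H ω (b₂ ω)) m :=
    hHc.measurable.comp_aemeasurable (aemeasurable_id.prodMk hm₂)
  have hXb₁ : AEMeasurable (fun ω => Hx ω (b₁ ω)) m :=
    hHxc.measurable.comp_aemeasurable (aemeasurable_id.prodMk hm₁)
  have hXb₂ : AEMeasurable (fun ω => Hx ω (b₂ ω)) m :=
    hHxc.measurable.comp_aemeasurable (aemeasurable_id.prodMk hm₂)
  have hqm : AEMeasurable q m := (hHb₂.sub hHb₁).div (hm₂.sub hm₁)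
  have hgm : AEMeasurable g m := Real.measurable_log.comp_aemeasurable (hm₂.sub hm₁)
  have hcomp : ∀ (T : ℝ) {f : Ω → ℝ}, AEMeasurable f m →
      AEMeasurable (fun ω => f (σ T ω)) m := by
    intro T f hf
    exact AEMeasurable.comp_aemeasurable' (by rwa [(hmp T).map_eq]) (hmp T).aemeasurable
  have hint : ∀ {f : Ω → ℝ} (K : ℝ), AEMeasurable f m → (∀ᵐ ω ∂m, |f ω| ≤ K) →
      MeasureTheory.Integrable f m := by
    intro f K hf hK
    exact MeasureTheory.Integrable.mono' (MeasureTheory.integrable_const K)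
      hf.aestronglyMeasurable (by simpa [Real.norm_eq_abs] using hK)
  have hshift : ∀ (T : ℝ) {f : Ω → ℝ}, MeasureTheory.AEStronglyMeasurable f m →
      ∫ ω, f (σ T ω) ∂m = ∫ ω, f ω ∂m := by
    intro T f hf
    rw [← MeasureTheory.integral_map (hmp T).aemeasurable (by rwa [(hmp T).map_eq]),
      (hmp T).map_eq]
  -- upper bound for g
  set L : ℝ := Real.log (2 * C + 1) with hLdef
  have hgL : ∀ θ, b₁ θ < b₂ θ → g θ ≤ L := by
    intro θ h
    have h1 := (hmem₁ θ).1
    have h2 := (hmem₂ θ).2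
    exact Real.log_le_log (by linarith) (by linarith)
  have hltT : ∀ T : ℝ, ∀ᵐ ω ∂m, b₁ (σ T ω) < b₂ (σ T ω) :=
    fun T => hlt.mono fun ω h => key3 ω h T
  -- key: ∫ (g ∘ σ T - g) = 0
  have int0 : ∀ T : ℝ, ∫ ω, (g (σ T ω) - g ω) ∂m = 0 := by
    intro T
    set gN : ℕ → Ω → ℝ := fun n θ => max (g θ) (-(n:ℝ)) with hgNdef
    have habs : ∀ (n : ℕ) (x : ℝ), x ≤ L → |max x (-(n:ℝ))| ≤ max (n:ℝ) |L| := by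
      intro n x hx
      rw [abs_le]
      constructor
      · have : -(n:ℝ) ≤ max x (-(n:ℝ)) := le_max_right _ _
        have h2 : -max (n:ℝ) |L| ≤ -(n:ℝ) := by
          simp only [neg_le_neg_iff]; exact le_max_left _ _
        linarith
      · have h1 : x ≤ |L| := hx.trans (le_abs_self L)
        have h2 : -(n:ℝ) ≤ (0:ℝ) := by simp
        have h3 : (0:ℝ) ≤ max (n:ℝ) |L| := le_trans (abs_nonneg L) (le_max_right _ _)
        exact max_le (h1.trans (le_max_right _ _)) (h2.trans h3)
    have hgNm : ∀ n, AEMeasurable (gN n) m := fun n => hgm.max aemeasurable_const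
    have hgNint : ∀ n, MeasureTheory.Integrable (gN n) m := fun n =>
      hint (max (n:ℝ) |L|) (hgNm n) (hlt.mono fun ω h => habs n _ (hgL ω h))
    have hgNTint : ∀ n, MeasureTheory.Integrable (fun ω => gN n (σ T ω)) m := fun n =>
      hint (max (n:ℝ) |L|) (hcomp T (hgNm n))
        ((hltT T).mono fun ω h => habs n _ (hgL _ h))
    have hzero : ∀ n, ∫ ω, (gN n (σ T ω) - gN n ω) ∂m = 0 := by
      intro n
      rw [MeasureTheory.integral_sub (hgNTint n) (hgNint n),
        hshift T (hgNm n).aestronglyMeasurable, sub_self]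
    have hdom := MeasureTheory.tendsto_integral_of_dominated_convergence
      (μ := m) (F := fun n ω => gN n (σ T ω) - gN n ω)
      (f := fun ω => g (σ T ω) - g ω) (fun _ => M * |T|)
      (fun n => ((hcomp T (hgNm n)).sub (hgNm n)).aestronglyMeasurable)
      (MeasureTheory.integrable_const _)
      (fun n => (hlt.and (hltT T)).mono fun ω hh => by
        have h1 := abs_max_sub_max_le_abs (g (σ T ω)) (g ω) (-(n:ℝ))
        have h2 := gbound ω hh.1 T
        rw [Real.norm_eq_abs]
        exact h1.trans h2)
      ((hlt.and (hltT T)).mono fun ω hh => by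
        obtain ⟨N, hN⟩ := exists_nat_ge (max (-(g ω)) (-(g (σ T ω))))
        refine Filter.Tendsto.congr' ?_ tendsto_const_nhds
        filter_upwards [Filter.eventually_ge_atTop N] with n hn
        have hn' : (N:ℝ) ≤ (n:ℝ) := Nat.cast_le.mpr hn
        have e1 : max (g ω) (-(n:ℝ)) = g ω := by
          have := (le_max_left (-(g ω)) (-(g (σ T ω)))).trans (hN.trans hn')
          exact max_eq_left (by linarith)
        have e2 : max (g (σ T ω)) (-(n:ℝ)) = g (σ T ω) := by
          have := (le_max_right (-(g ω)) (-(g (σ T ω)))).trans (hN.trans hn')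
          exact max_eq_left (by linarith)
        simp only [hgNdef, e1, e2])
    simp only [hzero] at hdom
    exact tendsto_nhds_unique hdom tendsto_const_nhds
  -- ∫ q = 0 via difference quotients
  have hq0 : ∫ ω, q ω ∂m = 0 := by
    set t : ℕ → ℝ := fun n => 1 / ((n:ℝ) + 1) with htdef
    have htpos : ∀ n, 0 < t n := fun n => by positivity
    have hF0 : ∀ n, ∫ ω, (g (σ (t n) ω) - g ω) / t n ∂m = 0 := by
      intro n
      rw [MeasureTheory.integral_div, int0 (t n), zero_div]
    have hdom := MeasureTheory.tendsto_integral_of_dominated_convergence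
      (μ := m) (F := fun n ω => (g (σ (t n) ω) - g ω) / t n)
      (f := q) (fun _ => M)
      (fun n => (((hcomp (t n) hgm).sub hgm).div_const (t n)).aestronglyMeasurable)
      (MeasureTheory.integrable_const _)
      (fun n => hlt.mono fun ω h => by
        have h1 := gbound ω h (t n)
        rw [Real.norm_eq_abs, abs_div, div_le_iff₀ (abs_pos.mpr (htpos n).ne')]
        calc |g (σ (t n) ω) - g ω| ≤ M * |t n| := h1
          _ = M * |t n| := rfl)
      (hlt.mono fun ω h => by
        have hd : HasDerivAt (fun T => g (σ T ω)) (q ω) 0 := by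
          have := gderiv ω h 0
          rwa [hσ.2.1 ω] at this
        have hs := hasDerivAt_iff_tendsto_slope.mp hd
        have ht0 : Filter.Tendsto t Filter.atTop (nhdsWithin 0 {(0:ℝ)}ᶜ) := by
          refine tendsto_nhdsWithin_of_tendsto_nhds_of_eventually_within _
            ?_ (Filter.Eventually.of_forall fun n => ?_)
          · simpa [htdef] using tendsto_one_div_add_atTop_nhds_zero_nat (𝕜 := ℝ)
          · exact (htpos n).ne'
        have hcomp' := hs.comp ht0
        refine hcomp'.congr fun n => ?_
        show slope (fun T => g (σ T ω)) 0 (t n) = (g (σ (t n) ω) - g ω) / t n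
        rw [slope_def_field]
        simp only [hσ.2.1 ω, sub_zero])
    simp only [hF0] at hdom
    exact tendsto_nhds_unique hdom tendsto_const_nhds
  -- concavity a.e.
  have hc1 : ∀ x : ℝ, Continuous fun ω => H ω x := fun x =>
    hHc.comp (continuous_id.prodMk continuous_const)
  have hcl : IsClosed {ω | ConcaveFn (H ω)} := by
    have hset : {ω | ConcaveFn (H ω)} = ⋂ (x₁ : ℝ), ⋂ (x₂ : ℝ), ⋂ (α : ℝ),
        ⋂ (_ : 0 ≤ α), ⋂ (_ : α ≤ 1),
        {ω | α * H ω x₁ + (1 - α) * H ω x₂ ≤ H ω (α * x₁ + (1 - α) * x₂)} := by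
      ext ω
      simp only [Set.mem_setOf_eq, Set.mem_iInter]
      exact Iff.rfl
    rw [hset]
    refine isClosed_iInter fun x₁ => isClosed_iInter fun x₂ => isClosed_iInter fun α =>
      isClosed_iInter fun _ => isClosed_iInter fun _ => ?_
    exact isClosed_le ((continuous_const.mul (hc1 x₁)).add
      (continuous_const.mul (hc1 x₂))) (hc1 _)
  have hconc_ae : ∀ᵐ ω ∂m, ConcaveFn (H ω) := by
    have h0 : m {ω | ConcaveFn (H ω)}ᶜ = 0 :=
      (prob_compl_eq_zero_iff hcl.measurableSet).mpr hconc
    rw [MeasureTheory.ae_iff]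
    exact h0
  -- pointwise comparison a.e.
  have hcomp_ae : ∀ᵐ ω ∂m, Hx ω (b₂ ω) ≤ q ω ∧ q ω ≤ Hx ω (b₁ ω) ∧
      (Hx ω (b₂ ω) < Hx ω (b₁ ω) → Hx ω (b₂ ω) < q ω ∧ q ω < Hx ω (b₁ ω)) := by
    filter_upwards [hlt, hconc_ae] with ω h12 hcf
    have hco := concaveFn_concaveOn hcf
    have hq_slope : q ω = slope (H ω) (b₁ ω) (b₂ ω) := by rw [slope_def_field]
    refine ⟨?_, ?_, ?_⟩
    · rw [hq_slope]
      exact hco.le_slope_of_hasDerivAt (Set.mem_univ _) (Set.mem_univ _) h12 (hder ω (b₂ ω))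
    · rw [hq_slope]
      exact hco.slope_le_of_hasDerivAt (Set.mem_univ _) (Set.mem_univ _) h12 (hder ω (b₁ ω))
    · intro hne
      rw [hq_slope]
      exact slope_strict_of_deriv_ne hco (hder ω) h12 hne
  -- integrability for the final comparison
  have hXb₁int : MeasureTheory.Integrable (fun ω => Hx ω (b₁ ω)) m :=
    hint M hXb₁ (Filter.Eventually.of_forall fun ω => hM ω _ (hmem₁ ω))
  have hXb₂int : MeasureTheory.Integrable (fun ω => Hx ω (b₂ ω)) m :=
    hint M hXb₂ (Filter.Eventually.of_forall fun ω => hM ω _ (hmem₂ ω))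
  have hqint : MeasureTheory.Integrable q m :=
    hint M hqm (hlt.mono fun ω h => qbound ω h)
  constructor
  · -- 0 < ∫ Hx(b₁)
    have hA : ∀ᵐ ω ∂m, 0 ≤ Hx ω (b₁ ω) - q ω := hcomp_ae.mono fun ω h => by linarith [h.2.1]
    have hAint : MeasureTheory.Integrable (fun ω => Hx ω (b₁ ω) - q ω) m := hXb₁int.sub hqint
    have hApos : (0:ℝ) < ∫ ω, (Hx ω (b₁ ω) - q ω) ∂m := by
      rcases (MeasureTheory.integral_nonneg_of_ae hA).lt_or_eq with hlt0 | heq0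
      · exact hlt0
      · exfalso
        have hz := (MeasureTheory.integral_eq_zero_iff_of_nonneg_ae hA hAint).mp heq0.symm
        have hnotA : ∀ᵐ ω ∂m, ω ∉ {ω | Hx ω (b₂ ω) < Hx ω (b₁ ω)} := by
          filter_upwards [hz, hcomp_ae] with ω h0 hcc
          intro hmemA
          have hstrict := (hcc.2.2 hmemA).2
          have h0' : Hx ω (b₁ ω) - q ω = 0 := h0
          linarith
        have hm0 : m {ω | Hx ω (b₂ ω) < Hx ω (b₁ ω)} = 0 := by
          have h' := MeasureTheory.ae_iff.mp hnotA
          exact MeasureTheory.measure_mono_null (fun ω hω => not_not_intro hω) h'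
        exact (ne_of_gt hpos) hm0
    rw [MeasureTheory.integral_sub hXb₁int hqint, hq0, sub_zero] at hApos
    exact hApos
  · -- ∫ Hx(b₂) < 0
    have hA : ∀ᵐ ω ∂m, 0 ≤ q ω - Hx ω (b₂ ω) := hcomp_ae.mono fun ω h => by linarith [h.1]
    have hAint : MeasureTheory.Integrable (fun ω => q ω - Hx ω (b₂ ω)) m := hqint.sub hXb₂int
    have hApos : (0:ℝ) < ∫ ω, (q ω - Hx ω (b₂ ω)) ∂m := by
      rcases (MeasureTheory.integral_nonneg_of_ae hA).lt_or_eq with hlt0 | heq0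
      · exact hlt0
      · exfalso
        have hz := (MeasureTheory.integral_eq_zero_iff_of_nonneg_ae hA hAint).mp heq0.symm
        have hnotA : ∀ᵐ ω ∂m, ω ∉ {ω | Hx ω (b₂ ω) < Hx ω (b₁ ω)} := by
          filter_upwards [hz, hcomp_ae] with ω h0 hcc
          intro hmemA
          have hstrict := (hcc.2.2 hmemA).1
          have h0' : q ω - Hx ω (b₂ ω) = 0 := h0
          linarith
        have hm0 : m {ω | Hx ω (b₂ ω) < Hx ω (b₁ ω)} = 0 := by
          have h' := MeasureTheory.ae_iff.mp hnotA
          exact MeasureTheory.measure_mono_null (fun ω hω => not_not_intro hω) h'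
        exact (ne_of_gt hpos) hm0
    rw [MeasureTheory.integral_sub hqint hXb₂int, hq0, zero_sub] at hApos
    linarith

/-- Two ordered bounded measurable equilibria for a concave skew-product flow produce
Lyapunov exponents of opposite signs; in particular there are at most two bounded
measurable equilibria strictly ordered almost everywhere. -/
theorem stmt8 {Ω : Type*} [MetricSpace Ω] [CompactSpace Ω]
    [MeasurableSpace Ω] [BorelSpace Ω]
    (σ : ℝ → Ω → Ω) (hσ : IsFlow σ)
    (H Hx : Ω → ℝ → ℝ)
    (hHc : Continuous fun p : Ω × ℝ => H p.1 p.2)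
    (hHxc : Continuous fun p : Ω × ℝ => Hx p.1 p.2)
    (hder : ∀ ω x, HasDerivAt (H ω) (Hx ω x) x)
    (m : MeasureTheory.Measure Ω) (herg : IsErgodicMeas σ m) :
    (∀ b₁ b₂ : Ω → ℝ, AEMeasurable b₁ m → AEMeasurable b₂ m →
      (∃ C, ∀ ω, |b₁ ω| ≤ C) → (∃ C, ∀ ω, |b₂ ω| ≤ C) →
      IsEquilibrium σ H b₁ → IsEquilibrium σ H b₂ →
      (∀ᵐ ω ∂m, b₁ ω < b₂ ω) →
      m {ω | ConcaveFn (H ω)} = 1 →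
      0 < m {ω | Hx ω (b₂ ω) < Hx ω (b₁ ω)} →
      (0 < ∫ ω, Hx ω (b₁ ω) ∂m) ∧ (∫ ω, Hx ω (b₂ ω) ∂m) < 0) ∧
    (m {ω | ConcaveFn (H ω)} = 1 →
      (∀ c₁ c₂ : Ω → ℝ, AEMeasurable c₁ m → AEMeasurable c₂ m →
        (∃ C, ∀ ω, |c₁ ω| ≤ C) → (∃ C, ∀ ω, |c₂ ω| ≤ C) →
        IsEquilibrium σ H c₁ → IsEquilibrium σ H c₂ →
        (∀ᵐ ω ∂m, c₁ ω < c₂ ω) →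
        0 < m {ω | Hx ω (c₂ ω) < Hx ω (c₁ ω)}) →
      ¬ ∃ c₁ c₂ c₃ : Ω → ℝ,
          AEMeasurable c₁ m ∧ AEMeasurable c₂ m ∧ AEMeasurable c₃ m ∧
          (∃ C, ∀ ω, |c₁ ω| ≤ C) ∧ (∃ C, ∀ ω, |c₂ ω| ≤ C) ∧ (∃ C, ∀ ω, |c₃ ω| ≤ C) ∧
          IsEquilibrium σ H c₁ ∧ IsEquilibrium σ H c₂ ∧ IsEquilibrium σ H c₃ ∧
          (∀ᵐ ω ∂m, c₁ ω < c₂ ω ∧ c₂ ω < c₃ ω)) := by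
  constructor
  · intro b₁ b₂ hm1 hm2 hb1 hb2 he1 he2 hltb hconcb hposb
    exact stmt8_pair σ hσ H Hx hHc hHxc hder m herg b₁ b₂ hm1 hm2 hb1 hb2 he1 he2
      hltb hconcb hposb
  · rintro hconc hpairs ⟨c₁, c₂, c₃, hm1, hm2, hm3, hb1, hb2, hb3, he1, he2, he3, hord⟩
    have h12 := stmt8_pair σ hσ H Hx hHc hHxc hder m herg c₁ c₂ hm1 hm2 hb1 hb2 he1 he2
      (hord.mono fun ω h => h.1) hconc
      (hpairs c₁ c₂ hm1 hm2 hb1 hb2 he1 he2 (hord.mono fun ω h => h.1))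
    have h23 := stmt8_pair σ hσ H Hx hHc hHxc hder m herg c₂ c₃ hm2 hm3 hb2 hb3 he2 he3
      (hord.mono fun ω h => h.2) hconc
      (hpairs c₂ c₃ hm2 hm3 hb2 hb3 he2 he3 (hord.mono fun ω h => h.2))
    linarith [h12.2, h23.1]
end

section
/- In the skew-product setting with 𝔥, 𝔥_x and 𝔥_xx continuous on Ω×ℝ, let m be a σ-ergodic measure and let b₁,b₂,b₃:Ω→ℝ be bounded m-measurable equilibria with b₁(ω)<b₂(ω)<b₃(ω) for m-a.e. ω∈Ω. Assume m({ω : x↦𝔥_x(ω,x) is concave})=1 and m({ω : 𝔥_xx(ω,b₁(ω))>𝔥_xx(ω,b₃(ω))})>0. Then ∫_Ω 𝔥_x(ω,b₂(ω))dm>0 and ∫_Ω 𝔥_x(ω,bᵢ(ω))dm<0 for i=1 and i=3. In particular, if m({ω : x↦𝔥_x(ω,x) is concave})=1 and every triple of bounded m-measurable equilibria c₁<c₂<c₃ (m-a.e.) satisfies m({ω : 𝔥_xx(ω,c₁(ω))>𝔥_xx(ω,c₃(ω))})>0, then there do not exist four bounded m-measurable equilibria which are pairwise strictly ordered m-a.e.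 -/
open Set Filter Topology MeasureTheory

/-- FTC representation of the slope. -/
lemma slope_rep (g G : ℝ → ℝ) (hG : ∀ x, HasDerivAt G (g x) x) (hgc : Continuous g)
    (a b : ℝ) : G b - G a = (b - a) * ∫ r in (0:ℝ)..1, g (a + r * (b - a)) := by
  have hD : ∀ r : ℝ, HasDerivAt (fun r : ℝ => G (a + r * (b - a)))
      (g (a + r * (b - a)) * (b - a)) r := by
    intro r
    have h1 : HasDerivAt (fun r : ℝ => a + r * (b - a)) (b - a) r := by
      simpa using ((hasDerivAt_id r).mul_const (b - a)).const_add a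
    exact (hG _).comp r h1
  have hint : ∫ r in (0:ℝ)..1, g (a + r * (b - a)) * (b - a)
      = G (a + 1 * (b - a)) - G (a + 0 * (b - a)) := by
    apply intervalIntegral.integral_eq_sub_of_hasDerivAt (fun r _ => hD r)
    exact ((hgc.comp (by continuity)).mul continuous_const).intervalIntegrable 0 1
  rw [intervalIntegral.integral_mul_const] at hint
  simp only [one_mul, zero_mul, add_zero] at hint
  have : a + (b - a) = b := by ring
  rw [this] at hint
  rw [← hint]; ring

/-- Hermite–Hadamard lower bound for concave g with antiderivative G. -/
lemma hh_lower (g G : ℝ → ℝ) (hG : ∀ x, HasDerivAt G (g x) x) (hgc : Continuous g)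
    (hconc : ConcaveFn g) {a b : ℝ} (hab : a < b) :
    g a + g b ≤ 2 * ((G b - G a) / (b - a)) := by
  have hba : (0:ℝ) < b - a := by linarith
  have hrep := slope_rep g G hG hgc a b
  have key : ∀ r ∈ Icc (0:ℝ) 1, g a + r * (g b - g a) ≤ g (a + r * (b - a)) := by
    intro r ⟨hr0, hr1⟩
    have := hconc a b (1 - r) (by linarith) (by linarith)
    have e1 : (1 - r) * a + (1 - (1 - r)) * b = a + r * (b - a) := by ring
    have e2 : (1 - r) * g a + (1 - (1 - r)) * g b = g a + r * (g b - g a) := by ring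
    rw [e1, e2] at this; exact this
  have hmono : ∫ r in (0:ℝ)..1, (g a + r * (g b - g a)) ≤
      ∫ r in (0:ℝ)..1, g (a + r * (b - a)) := by
    apply intervalIntegral.integral_mono_on zero_le_one
    · exact (continuous_const.add (continuous_id.mul continuous_const)).intervalIntegrable 0 1
    · exact (hgc.comp (by continuity)).intervalIntegrable 0 1
    · exact key
  have hval : ∫ r in (0:ℝ)..1, (g a + r * (g b - g a)) = g a + (g b - g a) / 2 := by
    have hD : ∀ r : ℝ, HasDerivAt (fun r : ℝ => g a * r + (g b - g a) * (r ^ 2 / 2))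
        (g a + r * (g b - g a)) r := by
      intro r
      have h1 : HasDerivAt (fun r : ℝ => g a * r) (g a) r := by
        simpa using (hasDerivAt_id r).const_mul (g a)
      have h2 : HasDerivAt (fun r : ℝ => (g b - g a) * (r ^ 2 / 2)) (r * (g b - g a)) r := by
        have : HasDerivAt (fun r : ℝ => r ^ 2 / 2) r r := by
          simpa using (hasDerivAt_pow 2 r).div_const 2
        simpa [mul_comm] using this.const_mul (g b - g a)
      exact h1.add h2
    rw [intervalIntegral.integral_eq_sub_of_hasDerivAt (fun r _ => hD r)
      ((continuous_const.add (continuous_id.mul continuous_const)).intervalIntegrable 0 1)]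
    norm_num; ring
  have : (G b - G a) / (b - a) = ∫ r in (0:ℝ)..1, g (a + r * (b - a)) := by
    rw [hrep]; field_simp
  rw [this]; rw [hval] at hmono; linarith

/-- A concave function equal to the chord at an interior point is affine on the interval. -/
lemma concave_eq_chord (g : ℝ → ℝ) (hconc : ConcaveFn g) {a b c : ℝ} (hab : a < b) (hbc : b < c)
    (heq : g b = ((c - b) * g a + (b - a) * g c) / (c - a)) :
    ∀ x ∈ Icc a c, g x = g a + (g c - g a) / (c - a) * (x - a) := by
  set s := (g c - g a) / (c - a) with hs
  set L : ℝ → ℝ := fun x => g a + s * (x - a) with hL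
  have hac : (0:ℝ) < c - a := by linarith
  have hLa : L a = g a := by simp [hL]
  have hLc : L c = g c := by simp only [hL, hs]; rw [div_mul_cancel₀ _ hac.ne']; ring
  have hLb : g b = L b := by
    rw [heq, hL, hs]; field_simp; ring
  have hgeL : ∀ x ∈ Icc a c, L x ≤ g x := by
    intro x ⟨hx1, hx2⟩
    set α := (c - x) / (c - a) with hα
    have hα0 : 0 ≤ α := div_nonneg (by linarith) (by linarith)
    have hα1 : α ≤ 1 := by rw [hα]; rw [div_le_one hac]; linarith
    have hcon := hconc a c α hα0 hα1
    have e1 : α * a + (1 - α) * c = x := by rw [hα]; field_simp; ring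
    rw [e1] at hcon
    calc L x = α * g a + (1 - α) * g c := by
            rw [hL, hs, hα]; field_simp; ring
      _ ≤ g x := hcon
  have hle1 : ∀ x ∈ Icc a b, g x ≤ L x := by
    intro x ⟨hx1, hx2⟩
    have hxc : x < c := lt_of_le_of_lt hx2 hbc
    set β := (c - b) / (c - x) with hβ
    have hcx : (0:ℝ) < c - x := by linarith
    have hβpos : 0 < β := div_pos (by linarith) hcx
    have hβ1 : β ≤ 1 := by rw [hβ, div_le_one hcx]; linarith
    have hcon := hconc x c β hβpos.le hβ1
    have e1 : β * x + (1 - β) * c = b := by rw [hβ]; field_simp; ring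
    rw [e1] at hcon
    have hLaff : β * L x + (1 - β) * L c = g a + s * ((β * x + (1 - β) * c) - a) := by
      simp only [hL]; ring
    rw [e1] at hLaff
    have hLbval : L b = g a + s * (b - a) := by simp [hL]
    have h5 : (1 - β) * L c = (1 - β) * g c := by rw [hLc]
    have hkey : β * g x ≤ β * L x := by linarith
    exact le_of_mul_le_mul_left hkey hβpos
  have hle2 : ∀ x ∈ Icc b c, g x ≤ L x := by
    intro x ⟨hx1, hx2⟩
    rcases eq_or_lt_of_le hx1 with rfl | hbx
    · exact le_of_eq hLb
    have hax : a < x := lt_of_lt_of_le hab hx1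
    set β := (b - a) / (x - a) with hβ
    have hxa : (0:ℝ) < x - a := by linarith
    have hβpos : 0 < β := div_pos (by linarith) hxa
    have hβ1 : β ≤ 1 := by rw [hβ, div_le_one hxa]; linarith
    have hcon := hconc a x (1 - β) (by linarith) (by linarith)
    have e1 : (1 - β) * a + (1 - (1 - β)) * x = b := by rw [hβ]; field_simp; ring
    rw [e1] at hcon
    have hLaff : (1 - β) * L a + (1 - (1 - β)) * L x
        = g a + s * (((1 - β) * a + (1 - (1 - β)) * x) - a) := by
      simp only [hL]; ring
    rw [e1] at hLaff
    have hLbval : L b = g a + s * (b - a) := by simp [hL]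
    have h5 : (1 - β) * L a = (1 - β) * g a := by rw [hLa]
    have hkey : (1 - (1 - β)) * g x ≤ (1 - (1 - β)) * L x := by linarith
    have : (0:ℝ) < 1 - (1 - β) := by linarith
    exact le_of_mul_le_mul_left hkey this
  intro x hx
  rcases le_total x b with h | h
  · exact le_antisymm (hle1 x ⟨hx.1, h⟩) (hgeL x hx)
  · exact le_antisymm (hle2 x ⟨h, hx.2⟩) (hgeL x hx)

/-- Derivatives of a concave function at endpoints of an interval where it equals a chord. -/
lemma chord_deriv_eq (g : ℝ → ℝ) (hconc : ConcaveFn g) {a b c da dc : ℝ}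
    (hab : a < b) (hbc : b < c)
    (hda : HasDerivAt g da a) (hdc : HasDerivAt g dc c)
    (heq : g b = ((c - b) * g a + (b - a) * g c) / (c - a)) : da = dc := by
  have hac : a < c := lt_trans hab hbc
  have hchord := concave_eq_chord g hconc hab hbc heq
  set s := (g c - g a) / (c - a) with hs
  set L : ℝ → ℝ := fun x => g a + s * (x - a) with hL
  have hLder : ∀ x : ℝ, HasDerivAt L s x := by
    intro x
    have : HasDerivAt (fun x : ℝ => x - a) 1 x := (hasDerivAt_id x).sub_const a
    simpa [hL] using ((this.const_mul s).const_add (g a))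
  have hoa : da = s := by
    have h1 : HasDerivWithinAt g da (Icc a c) a := (hda.hasDerivWithinAt)
    have h2 : HasDerivWithinAt g s (Icc a c) a := by
      apply ((hLder a).hasDerivWithinAt).congr
      · intro x hx; exact hchord x hx
      · exact hchord a ⟨le_refl a, hac.le⟩
    exact (uniqueDiffOn_Icc hac a ⟨le_refl a, hac.le⟩).eq_deriv _ h1 h2
  have hoc : dc = s := by
    have h1 : HasDerivWithinAt g dc (Icc a c) c := (hdc.hasDerivWithinAt)
    have h2 : HasDerivWithinAt g s (Icc a c) c := by
      apply ((hLder c).hasDerivWithinAt).congr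
      · intro x hx; exact hchord x hx
      · exact hchord c ⟨hac.le, le_refl c⟩
    exact (uniqueDiffOn_Icc hac c ⟨hac.le, le_refl c⟩).eq_deriv _ h1 h2
  rw [hoa, hoc]

section keyineq
variable (g G : ℝ → ℝ)

/-- Common setup: nonneg + strict inequality for concave g. -/
lemma key_le_aux (hG : ∀ x, HasDerivAt G (g x) x) (hgc : Continuous g)
    (hconc : ConcaveFn g) {a b c : ℝ} (hab : a < b) (hbc : b < c) :
    ((c - b) * ((G b - G a) / (b - a)) + (b - a) * ((G c - G b) / (c - b))
      ≤ ((b - a) + (c - b)) * g b) ∧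
    (∀ da dc : ℝ, HasDerivAt g da a → HasDerivAt g dc c → dc < da →
      (c - b) * ((G b - G a) / (b - a)) + (b - a) * ((G c - G b) / (c - b))
        < ((b - a) + (c - b)) * g b) := by
  have hu : (0:ℝ) < b - a := by linarith
  have hv : (0:ℝ) < c - b := by linarith
  have h1 := slope_rep g G hG hgc b a
  have h2 := slope_rep g G hG hgc b c
  set I₁ := ∫ r in (0:ℝ)..1, g (b + r * (a - b)) with hI₁
  set I₂ := ∫ r in (0:ℝ)..1, g (b + r * (c - b)) with hI₂
  have e1 : (G b - G a) / (b - a) = I₁ := by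
    have h : G b - G a = (b - a) * I₁ := by linear_combination (-1 : ℝ) * h1
    rw [h, mul_div_cancel_left₀ _ hu.ne']
  have e2 : (G c - G b) / (c - b) = I₂ := by
    rw [h2, mul_div_cancel_left₀ _ hv.ne']
  rw [e1, e2]
  set ψ : ℝ → ℝ := fun r =>
    ((b - a) + (c - b)) * g b
      - ((c - b) * g (b + r * (a - b)) + (b - a) * g (b + r * (c - b))) with hψ
  have hψc : Continuous ψ := by
    apply continuous_const.sub
    exact (continuous_const.mul (hgc.comp (by continuity))).add
      (continuous_const.mul (hgc.comp (by continuity)))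
  have hca0 : c - a ≠ 0 := sub_ne_zero.mpr (by linarith)
  have hψnn : ∀ r : ℝ, 0 ≤ ψ r := by
    intro r
    have huv : (0:ℝ) < (b - a) + (c - b) := by linarith
    have hα0 : (0:ℝ) ≤ (c - b) / ((b - a) + (c - b)) := le_of_lt (div_pos hv huv)
    have hα1 : (c - b) / ((b - a) + (c - b)) ≤ 1 := by rw [div_le_one huv]; linarith
    have hcon := hconc (b + r * (a - b)) (b + r * (c - b)) _ hα0 hα1
    have ecomb : (c - b) / ((b - a) + (c - b)) * (b + r * (a - b))
        + (1 - (c - b) / ((b - a) + (c - b))) * (b + r * (c - b)) = b := by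
      field_simp [hca0]
      try ring
    rw [ecomb] at hcon
    have := mul_le_mul_of_nonneg_left hcon huv.le
    have expand : ((b - a) + (c - b)) * ((c - b) / ((b - a) + (c - b)) * g (b + r * (a - b))
        + (1 - (c - b) / ((b - a) + (c - b))) * g (b + r * (c - b)))
        = (c - b) * g (b + r * (a - b)) + (b - a) * g (b + r * (c - b)) := by
      field_simp [hca0]
      try ring
    rw [expand] at this
    simp only [hψ]; linarith
  have hint1 : IntervalIntegrable (fun r => g (b + r * (a - b))) volume 0 1 :=
    (hgc.comp (by continuity)).intervalIntegrable 0 1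
  have hint2 : IntervalIntegrable (fun r => g (b + r * (c - b))) volume 0 1 :=
    (hgc.comp (by continuity)).intervalIntegrable 0 1
  have hψint : ∫ r in (0:ℝ)..1, ψ r
      = ((b - a) + (c - b)) * g b - ((c - b) * I₁ + (b - a) * I₂) := by
    simp only [hψ]
    rw [intervalIntegral.integral_sub (intervalIntegrable_const)
      ((hint1.const_mul (c - b)).add (hint2.const_mul (b - a))),
      intervalIntegral.integral_add (hint1.const_mul (c - b)) (hint2.const_mul (b - a)),
      intervalIntegral.integral_const_mul, intervalIntegral.integral_const_mul]
    simp
    rfl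
  have hnn : 0 ≤ ∫ r in (0:ℝ)..1, ψ r :=
    intervalIntegral.integral_nonneg zero_le_one (fun x _ => hψnn x)
  constructor
  · linarith [hψint, hnn]
  · intro da dc hda hdc hgap
    have hψ1 : 0 < ψ 1 := by
      rcases lt_or_eq_of_le (hψnn 1) with h | h
      · exact h
      · exfalso
        have hval : ψ 1 = ((b - a) + (c - b)) * g b - ((c - b) * g a + (b - a) * g c) := by
          simp only [hψ]; norm_num
        have h0 : ((b - a) + (c - b)) * g b - ((c - b) * g a + (b - a) * g c) = 0 := by
          rw [← hval, ← h]
        have hca : (0:ℝ) < c - a := by linarith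
        have hgb : g b = ((c - b) * g a + (b - a) * g c) / (c - a) := by
          field_simp; linarith
        exact absurd (chord_deriv_eq g hconc hab hbc hda hdc hgb) (by linarith [hgap])
    have hpos : 0 < ∫ r in (0:ℝ)..1, ψ r := by
      have hopen : IsOpen (ψ ⁻¹' Ioi 0) := isOpen_Ioi.preimage hψc
      obtain ⟨ε, hε, hball⟩ := Metric.isOpen_iff.mp hopen 1 hψ1
      set δ := min ε 1 with hδ
      have hδ0 : 0 < δ := lt_min hε one_pos
      have hδ1 : δ ≤ 1 := min_le_right _ _
      have hδε : δ ≤ ε := min_le_left _ _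
      have hsplit : (∫ r in (0:ℝ)..(1-δ), ψ r) + (∫ r in (1-δ)..1, ψ r)
          = ∫ r in (0:ℝ)..1, ψ r :=
        intervalIntegral.integral_add_adjacent_intervals
          (hψc.intervalIntegrable _ _) (hψc.intervalIntegrable _ _)
      have hfirst : 0 ≤ ∫ r in (0:ℝ)..(1-δ), ψ r :=
        intervalIntegral.integral_nonneg (by linarith) (fun x _ => hψnn x)
      have hsecond : 0 < ∫ r in (1-δ)..1, ψ r := by
        apply intervalIntegral.intervalIntegral_pos_of_pos_on (hψc.intervalIntegrable _ _)
        · intro x hx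
          have hmem : x ∈ Metric.ball (1:ℝ) ε := by
            rw [Metric.mem_ball, Real.dist_eq, abs_lt]
            constructor <;> [linarith [hx.1]; linarith [hx.2]]
          exact hball hmem
        · linarith
      linarith
    linarith [hψint, hpos]

end keyineq


section cobound
variable {Ω : Type*} [MetricSpace Ω] [CompactSpace Ω] [MeasurableSpace Ω] [BorelSpace Ω]

lemma integrable_of_bound (m : Measure Ω) [IsFiniteMeasure m] (f : Ω → ℝ)
    (hf : AEMeasurable f m) (C : ℝ) (h : ∀ ω, |f ω| ≤ C) : Integrable f m :=
  Integrable.mono' (integrable_const C) hf.aestronglyMeasurable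
    (ae_of_all _ (by simpa [Real.norm_eq_abs] using h))

/-- The mean of an `L¹` additive cocycle which is a coboundary of a bounded
measurable function vanishes. -/
lemma coboundary (σ : ℝ → Ω → Ω) (hσ : IsFlow σ)
    (m : Measure Ω) (hprob : IsProbabilityMeasure m)
    (hpres : ∀ t : ℝ, MeasurePreserving (σ t) m m)
    (F Gf : Ω → ℝ) (hF : AEMeasurable F m) (hG : AEMeasurable Gf m)
    (CF CG : ℝ) (hFb : ∀ ω, |F ω| ≤ CF) (hGb : ∀ ω, |Gf ω| ≤ CG)
    (hderiv : ∀ ω t, HasDerivAt (fun s => F (σ s ω)) (Gf (σ t ω)) t)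
    (hGcont : ∀ ω, Continuous fun s : ℝ => Gf (σ s ω)) :
    ∫ ω, Gf ω ∂m = 0 := by
  have hres : IsProbabilityMeasure ((volume : Measure ℝ).restrict (Ioc (0:ℝ) 1)) := by
    constructor
    rw [Measure.restrict_apply_univ]
    simp [Real.volume_Ioc]
  set ν : Measure (ℝ × Ω) := ((volume : Measure ℝ).restrict (Ioc (0:ℝ) 1)).prod m with hν
  have hνprob : IsProbabilityMeasure ν := by infer_instance
  have hπcont : Continuous (fun p : ℝ × Ω => σ p.1 p.2) := hσ.1
  have hπmeas : Measurable (fun p : ℝ × Ω => σ p.1 p.2) := hπcont.measurable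
  have hmap : Measure.map (fun p : ℝ × Ω => σ p.1 p.2) ν = m := by
    ext A hA
    rw [Measure.map_apply hπmeas hA, hν, Measure.prod_apply (hπmeas hA)]
    have hfib : ∀ s : ℝ, m (Prod.mk s ⁻¹' ((fun p : ℝ × Ω => σ p.1 p.2) ⁻¹' A)) = m A := by
      intro s
      have : Prod.mk s ⁻¹' ((fun p : ℝ × Ω => σ p.1 p.2) ⁻¹' A) = σ s ⁻¹' A := rfl
      rw [this, (hpres s).measure_preimage hA.nullMeasurableSet]
    simp_rw [hfib]
    rw [lintegral_const, Measure.restrict_apply_univ]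
    simp [Real.volume_Ioc]
  have hMP : MeasurePreserving (fun p : ℝ × Ω => σ p.1 p.2) ν m := ⟨hπmeas, hmap⟩
  have hGν : AEMeasurable (fun p : ℝ × Ω => Gf (σ p.1 p.2)) ν :=
    hG.comp_quasiMeasurePreserving hMP.quasiMeasurePreserving
  have hGνi : Integrable (fun p : ℝ × Ω => Gf (σ p.1 p.2)) ν :=
    Integrable.mono' (integrable_const CG) hGν.aestronglyMeasurable
      (ae_of_all _ (fun p => by simpa [Real.norm_eq_abs] using hGb (σ p.1 p.2)))
  have key1 : ∫ ω, Gf ω ∂m = ∫ p, Gf (σ p.1 p.2) ∂ν := by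
    rw [← hmap]
    exact integral_map hπmeas.aemeasurable (hmap ▸ hG.aestronglyMeasurable)
  have key2 : ∫ p, Gf (σ p.1 p.2) ∂ν
      = ∫ ω, (∫ s in Ioc (0:ℝ) 1, Gf (σ s ω)) ∂m := by
    rw [hν, integral_prod _ hGνi]
    exact integral_integral_swap hGνi
  have hFTC : ∀ ω, (∫ s in Ioc (0:ℝ) 1, Gf (σ s ω)) = F (σ 1 ω) - F ω := by
    intro ω
    have h1 : (∫ s in (0:ℝ)..1, Gf (σ s ω)) = F (σ 1 ω) - F (σ 0 ω) :=
      intervalIntegral.integral_eq_sub_of_hasDerivAt (fun t _ => hderiv ω t)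
        ((hGcont ω).intervalIntegrable 0 1)
    rw [intervalIntegral.integral_of_le zero_le_one, hσ.2.1 ω] at h1
    exact h1
  have hF1 : AEMeasurable (fun ω => F (σ 1 ω)) m :=
    hF.comp_quasiMeasurePreserving (hpres 1).quasiMeasurePreserving
  have hFi : Integrable F m := integrable_of_bound m F hF CF hFb
  have hF1i : Integrable (fun ω => F (σ 1 ω)) m :=
    integrable_of_bound m _ hF1 CF (fun ω => hFb _)
  have hinv : ∫ ω, F (σ 1 ω) ∂m = ∫ ω, F ω ∂m := by
    have hsm : AEStronglyMeasurable F (Measure.map (σ 1) m) := by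
      rw [(hpres 1).map_eq]; exact hF.aestronglyMeasurable
    have h := integral_map (hpres 1).measurable.aemeasurable hsm
    rw [(hpres 1).map_eq] at h
    exact h.symm
  have key3 : ∫ ω, (F (σ 1 ω) - F ω) ∂m = 0 := by
    rw [integral_sub hF1i hFi, hinv, sub_self]
  rw [key1, key2]
  simp_rw [hFTC]
  exact key3

end cobound


section slopezero
variable {Ω : Type*} [MetricSpace Ω] [CompactSpace Ω] [MeasurableSpace Ω] [BorelSpace Ω]
  (σ : ℝ → Ω → Ω) (H : Ω → ℝ → ℝ) (m : Measure Ω)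

lemma nonempty_of_prob (hprob : IsProbabilityMeasure m) : Nonempty Ω := by
  by_contra hne
  rw [not_nonempty_iff] at hne
  have h1 := hprob.measure_univ
  rw [Set.univ_eq_empty_iff.mpr hne, measure_empty] at h1
  exact zero_ne_one h1

/-- The average of the slope between two ordered bounded equilibria vanishes. -/
lemma slope_integral_zero (hσ : IsFlow σ)
    (hHc : Continuous fun pr : Ω × ℝ => H pr.1 pr.2)
    (hprob : IsProbabilityMeasure m)
    (hpres : ∀ t : ℝ, MeasurePreserving (σ t) m m)
    (p q : Ω → ℝ) (hp : AEMeasurable p m) (hq : AEMeasurable q m)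
    (C : ℝ) (hpb : ∀ ω, |p ω| ≤ C) (hqb : ∀ ω, |q ω| ≤ C)
    (heqp : IsEquilibrium σ H p) (heqq : IsEquilibrium σ H q)
    (hord : ∀ᵐ ω ∂m, p ω < q ω)
    (M : ℝ) (hM0 : 0 ≤ M)
    (hLip : ∀ ω x y, |x| ≤ C → |y| ≤ C → |H ω y - H ω x| ≤ M * |y - x|) :
    ∫ ω, (H ω (q ω) - H ω (p ω)) / (q ω - p ω) ∂m = 0 := by
  -- basic measurability facts
  have hHb : ∀ b : Ω → ℝ, AEMeasurable b m → AEMeasurable (fun ω => H ω (b ω)) m := by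
    intro b hb
    exact hHc.measurable.comp_aemeasurable (aemeasurable_id.prodMk hb)
  set v : Ω → ℝ := fun ω => q ω - p ω with hv
  set Δ : Ω → ℝ := fun ω => H ω (q ω) - H ω (p ω) with hΔ
  have hvmeas : AEMeasurable v m := hq.sub hp
  have hΔmeas : AEMeasurable Δ m := (hHb q hq).sub (hHb p hp)
  have hΔbd : ∀ ω, |Δ ω| ≤ M * |v ω| := fun ω => hLip ω (p ω) (q ω) (hpb ω) (hqb ω)
  -- continuity along orbits
  have horb : ∀ (b : Ω → ℝ), IsEquilibrium σ H b → ∀ ω, Continuous fun s : ℝ => b (σ s ω) := by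
    intro b hb ω
    exact continuous_iff_continuousAt.mpr fun t => (hb ω t).continuousAt
  -- for each ε > 0 the regularized slope integrates to zero
  have hstep : ∀ ε : ℝ, 0 < ε →
      ∫ ω, (v ω / ((v ω) ^ 2 + ε ^ 2)) * Δ ω ∂m = 0 := by
    intro ε hε
    set F : Ω → ℝ := fun ω => Real.log ((v ω) ^ 2 + ε ^ 2) / 2 with hF
    set Gf : Ω → ℝ := fun ω => (v ω / ((v ω) ^ 2 + ε ^ 2)) * Δ ω with hGf
    have hFmeas : AEMeasurable F m := by
      apply AEMeasurable.div_const
      exact Real.measurable_log.comp_aemeasurable (((hvmeas.pow_const 2).add_const (ε ^ 2)))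
    have hGmeas : AEMeasurable Gf m :=
      (hvmeas.div ((hvmeas.pow_const 2).add_const (ε ^ 2))).mul hΔmeas
    have hvpos : ∀ ω, (0:ℝ) < (v ω) ^ 2 + ε ^ 2 := fun ω => by positivity
    have hvb : ∀ ω, |v ω| ≤ 2 * C := by
      intro ω
      calc |v ω| ≤ |q ω| + |p ω| := abs_sub _ _
        _ ≤ 2 * C := by linarith [hpb ω, hqb ω]
    have hFbd : ∀ ω, |F ω| ≤ |Real.log (ε ^ 2)| + |Real.log (4 * C ^ 2 + ε ^ 2)| := by
      intro ω
      have h1 : Real.log (ε ^ 2) ≤ Real.log ((v ω) ^ 2 + ε ^ 2) :=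
        Real.log_le_log (by positivity) (by nlinarith)
      have h2 : Real.log ((v ω) ^ 2 + ε ^ 2) ≤ Real.log (4 * C ^ 2 + ε ^ 2) :=
        Real.log_le_log (hvpos ω) (by nlinarith [hvb ω, abs_nonneg (v ω), neg_abs_le (v ω), le_abs_self (v ω)])
      rw [hF, abs_le]
      constructor
      · have := neg_abs_le (Real.log (ε ^ 2))
        have h3 : 0 ≤ |Real.log (4 * C ^ 2 + ε ^ 2)| := abs_nonneg _
        have h4 : 0 ≤ |Real.log (ε ^ 2)| := abs_nonneg _
        simp only []
        linarith
      · have := le_abs_self (Real.log (4 * C ^ 2 + ε ^ 2))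
        have h3 : 0 ≤ |Real.log (ε ^ 2)| := abs_nonneg _
        have h4 : 0 ≤ |Real.log (4 * C ^ 2 + ε ^ 2)| := abs_nonneg _
        simp only []
        linarith
    have hGbd : ∀ ω, |Gf ω| ≤ M := by
      intro ω
      simp only [hGf]
      rw [abs_mul, abs_div, abs_of_pos (hvpos ω)]
      have h1 : |v ω| / ((v ω) ^ 2 + ε ^ 2) * |Δ ω| ≤ |v ω| / ((v ω) ^ 2 + ε ^ 2) * (M * |v ω|) := by
        apply mul_le_mul_of_nonneg_left (hΔbd ω)
        positivity
      refine le_trans h1 ?_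
      rw [div_mul_eq_mul_div, div_le_iff₀ (hvpos ω)]
      have h2 : |v ω| * (M * |v ω|) = M * (v ω) ^ 2 := by
        rw [← sq_abs (v ω)]; ring
      rw [h2]
      nlinarith [sq_nonneg ε, sq_nonneg (v ω)]
    have hderiv : ∀ ω t, HasDerivAt (fun s => F (σ s ω)) (Gf (σ t ω)) t := by
      intro ω t
      have hvd : HasDerivAt (fun s => v (σ s ω)) (Δ (σ t ω)) t := by
        exact (heqq ω t).sub (heqp ω t)
      have hsq : HasDerivAt (fun s => (v (σ s ω)) ^ 2 + ε ^ 2)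
          (2 * v (σ t ω) * Δ (σ t ω)) t := by
        have := (hvd.pow 2)
        simpa [mul_comm, mul_assoc, pow_one] using this.add_const (ε ^ 2)
      have hlog : HasDerivAt (fun s => Real.log ((v (σ s ω)) ^ 2 + ε ^ 2))
          ((2 * v (σ t ω) * Δ (σ t ω)) / ((v (σ t ω)) ^ 2 + ε ^ 2)) t :=
        hsq.log (ne_of_gt (hvpos (σ t ω)))
      have := hlog.div_const 2
      refine this.congr_deriv ?_
      rw [hGf]
      field_simp
    have hGcont : ∀ ω, Continuous fun s : ℝ => Gf (σ s ω) := by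
      intro ω
      have hσω : Continuous fun s : ℝ => σ s ω :=
        hσ.1.comp (continuous_id.prodMk continuous_const)
      have hpc : Continuous fun s : ℝ => p (σ s ω) := horb p heqp ω
      have hqc : Continuous fun s : ℝ => q (σ s ω) := horb q heqq ω
      have hvc : Continuous fun s : ℝ => v (σ s ω) := hqc.sub hpc
      have hΔc : Continuous fun s : ℝ => Δ (σ s ω) := by
        apply Continuous.sub
        · exact hHc.comp (hσω.prodMk hqc)
        · exact hHc.comp (hσω.prodMk hpc)
      exact ((hvc.div ((hvc.pow 2).add continuous_const)
        (fun s => ne_of_gt (hvpos (σ s ω)))).mul hΔc)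
    exact coboundary σ hσ m hprob hpres F Gf hFmeas hGmeas _ M hFbd hGbd hderiv hGcont
  -- dominated convergence as ε → 0
  have hseq : ∀ n : ℕ, ∫ ω, (v ω / ((v ω) ^ 2 + (1 / (n + 1) : ℝ) ^ 2)) * Δ ω ∂m = 0 :=
    fun n => hstep (1 / (n + 1)) (by positivity)
  have hlim : Tendsto (fun n : ℕ => ∫ ω, (v ω / ((v ω) ^ 2 + (1 / (n + 1) : ℝ) ^ 2)) * Δ ω ∂m)
      atTop (𝓝 (∫ ω, Δ ω / v ω ∂m)) := by
    apply tendsto_integral_of_dominated_convergence (fun _ => M)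
    · intro n
      exact ((hvmeas.div ((hvmeas.pow_const 2).add_const _)).mul hΔmeas).aestronglyMeasurable
    · exact integrable_const M
    · intro n
      filter_upwards [] with ω
      have hvpos : (0:ℝ) < (v ω) ^ 2 + (1 / (n + 1) : ℝ) ^ 2 := by positivity
      rw [Real.norm_eq_abs, abs_mul, abs_div, abs_of_pos hvpos]
      have h1 : |v ω| / ((v ω) ^ 2 + (1 / (n + 1) : ℝ) ^ 2) * |Δ ω|
          ≤ |v ω| / ((v ω) ^ 2 + (1 / (n + 1) : ℝ) ^ 2) * (M * |v ω|) := by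
        apply mul_le_mul_of_nonneg_left (hΔbd ω)
        positivity
      refine le_trans h1 ?_
      rw [div_mul_eq_mul_div, div_le_iff₀ hvpos]
      have h2 : |v ω| * (M * |v ω|) = M * (v ω) ^ 2 := by
        rw [← sq_abs (v ω)]; ring
      rw [h2]
      nlinarith [sq_nonneg (v ω), sq_nonneg ((1 : ℝ) / (n + 1))]
    · filter_upwards [hord] with ω hω
      have hvne : v ω ≠ 0 := by rw [hv]; simp only []; intro h; linarith [sub_eq_zero.mp h]
      have hv2 : (0:ℝ) < (v ω) ^ 2 := by positivity
      have htend : Tendsto (fun n : ℕ => (v ω) ^ 2 + (1 / (n + 1) : ℝ) ^ 2) atTop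
          (𝓝 ((v ω) ^ 2)) := by
        have h0 : Tendsto (fun n : ℕ => (1 / (n + 1) : ℝ)) atTop (𝓝 0) :=
          tendsto_one_div_add_atTop_nhds_zero_nat
        have := (h0.pow 2)
        simpa using tendsto_const_nhds.add this
      have := (tendsto_const_nhds (x := v ω)).div htend (ne_of_gt hv2)
      have hmul := this.mul (tendsto_const_nhds (x := Δ ω))
      have heq : v ω / (v ω) ^ 2 * Δ ω = Δ ω / v ω := by
        field_simp [hvne]
      rw [heq] at hmul
      exact hmul
  have hzero : Tendsto (fun n : ℕ => ∫ ω, (v ω / ((v ω) ^ 2 + (1 / (n + 1) : ℝ) ^ 2)) * Δ ω ∂m)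
      atTop (𝓝 0) := by
    have hfe : (fun n : ℕ => ∫ ω, (v ω / ((v ω) ^ 2 + (1 / (n + 1) : ℝ) ^ 2)) * Δ ω ∂m)
        = fun _ => (0:ℝ) := funext hseq
    rw [hfe]; exact tendsto_const_nhds
  have := tendsto_nhds_unique hlim hzero
  rw [← this]

end slopezero

lemma key_div (g G : ℝ → ℝ) (hG : ∀ x, HasDerivAt G (g x) x) (hgc : Continuous g)
    (hconc : ConcaveFn g) {a b c : ℝ} (hab : a < b) (hbc : b < c) :
    ((G b - G a) / (b - a) + (G c - G b) / (c - b) - (G c - G a) / (c - a) ≤ g b) ∧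
    (∀ da dc : ℝ, HasDerivAt g da a → HasDerivAt g dc c → dc < da →
      (G b - G a) / (b - a) + (G c - G b) / (c - b) - (G c - G a) / (c - a) < g b) := by
  obtain ⟨h1, h2⟩ := key_le_aux g G hG hgc hconc hab hbc
  have hu : b - a ≠ 0 := sub_ne_zero.mpr (by linarith)
  have hv : c - b ≠ 0 := sub_ne_zero.mpr (by linarith)
  have hca : c - a ≠ 0 := sub_ne_zero.mpr (by linarith)
  have huv : (0:ℝ) < (b - a) + (c - b) := by linarith
  have e : (G b - G a) / (b - a) + (G c - G b) / (c - b) - (G c - G a) / (c - a)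
      = ((c - b) * ((G b - G a) / (b - a)) + (b - a) * ((G c - G b) / (c - b)))
        / ((b - a) + (c - b)) := by
    have h' : (b - a) + (c - b) = c - a := by ring
    rw [h']
    field_simp
    ring
  constructor
  · rw [e, div_le_iff₀ huv]; linarith
  · intro da dc hda hdc hgap
    rw [e, div_lt_iff₀ huv]
    have := h2 da dc hda hdc hgap
    linarith


section triple
variable {Ω : Type*} [MetricSpace Ω] [CompactSpace Ω] [MeasurableSpace Ω] [BorelSpace Ω]

lemma triple_lemma (σ : ℝ → Ω → Ω) (hσ : IsFlow σ)
    (H Hx Hxx : Ω → ℝ → ℝ)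
    (hHc : Continuous fun p : Ω × ℝ => H p.1 p.2)
    (hHxc : Continuous fun p : Ω × ℝ => Hx p.1 p.2)
    (hder : ∀ ω x, HasDerivAt (H ω) (Hx ω x) x)
    (hder2 : ∀ ω x, HasDerivAt (Hx ω) (Hxx ω x) x)
    (m : MeasureTheory.Measure Ω) (herg : IsErgodicMeas σ m)
    (b₁ b₂ b₃ : Ω → ℝ)
    (hm₁ : AEMeasurable b₁ m) (hm₂ : AEMeasurable b₂ m) (hm₃ : AEMeasurable b₃ m)
    (hb₁ : ∃ C, ∀ ω, |b₁ ω| ≤ C) (hb₂ : ∃ C, ∀ ω, |b₂ ω| ≤ C) (hb₃ : ∃ C, ∀ ω, |b₃ ω| ≤ C)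
    (he₁ : IsEquilibrium σ H b₁) (he₂ : IsEquilibrium σ H b₂) (he₃ : IsEquilibrium σ H b₃)
    (hord : ∀ᵐ ω ∂m, b₁ ω < b₂ ω ∧ b₂ ω < b₃ ω)
    (hconcm : m {ω | ConcaveFn (Hx ω)} = 1)
    (hS : 0 < m {ω | Hxx ω (b₃ ω) < Hxx ω (b₁ ω)}) :
    (0 < ∫ ω, Hx ω (b₂ ω) ∂m) ∧ (∫ ω, Hx ω (b₁ ω) ∂m) < 0 ∧
      (∫ ω, Hx ω (b₃ ω) ∂m) < 0 := by
  obtain ⟨hprob, hpres, -⟩ := herg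
  have hne : Nonempty Ω := nonempty_of_prob m hprob
  obtain ⟨ω₀⟩ := hne
  obtain ⟨C₁, hC₁⟩ := hb₁
  obtain ⟨C₂, hC₂⟩ := hb₂
  obtain ⟨C₃, hC₃⟩ := hb₃
  set C := max C₁ (max C₂ C₃) with hC
  have hb1C : ∀ ω, |b₁ ω| ≤ C := fun ω => le_trans (hC₁ ω) (le_max_left _ _)
  have hb2C : ∀ ω, |b₂ ω| ≤ C := fun ω =>
    le_trans (hC₂ ω) (le_trans (le_max_left _ _) (le_max_right _ _))
  have hb3C : ∀ ω, |b₃ ω| ≤ C := fun ω =>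
    le_trans (hC₃ ω) (le_trans (le_max_right _ _) (le_max_right _ _))
  have hC0 : 0 ≤ C := le_trans (abs_nonneg _) (hb1C ω₀)
  -- a uniform bound for |Hx| on the relevant compact set
  have hK : IsCompact ((univ : Set Ω) ×ˢ Icc (-C) C) := isCompact_univ.prod isCompact_Icc
  have hKne : ((univ : Set Ω) ×ˢ Icc (-C) C).Nonempty :=
    ⟨(ω₀, 0), mem_univ _, by simp only [Set.mem_Icc]; exact ⟨by linarith, hC0⟩⟩
  obtain ⟨p₀, hp₀, hmax⟩ := hK.exists_isMaxOn hKne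
    ((continuous_abs.comp hHxc).continuousOn)
  set M := |Hx p₀.1 p₀.2| with hMdef
  have hM0 : 0 ≤ M := abs_nonneg _
  have hM : ∀ ω x, |x| ≤ C → |Hx ω x| ≤ M := by
    intro ω x hx
    have hx' := abs_le.mp hx
    exact hmax (Set.mk_mem_prod (mem_univ ω) (Set.mem_Icc.mpr hx'))
  have gcont : ∀ ω, Continuous (Hx ω) := fun ω =>
    hHxc.comp (continuous_const.prodMk continuous_id)
  -- Lipschitz bound
  have hLip : ∀ ω x y, |x| ≤ C → |y| ≤ C → |H ω y - H ω x| ≤ M * |y - x| := by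
    intro ω x y hx hy
    have hrep := slope_rep (Hx ω) (H ω) (hder ω) (gcont ω) x y
    have hIb : |∫ r in (0:ℝ)..1, Hx ω (x + r * (y - x))| ≤ M * |1 - 0| := by
      rw [← Real.norm_eq_abs]
      apply intervalIntegral.norm_integral_le_of_norm_le_const
      intro r hr
      rw [uIoc_of_le zero_le_one] at hr
      have hr0 : 0 ≤ r := le_of_lt hr.1
      have hr1 : r ≤ 1 := hr.2
      rw [Real.norm_eq_abs]
      apply hM
      have hx' := abs_le.mp hx
      have hy' := abs_le.mp hy
      rw [abs_le]
      constructor <;> nlinarith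
    rw [hrep, abs_mul]
    calc |y - x| * |∫ r in (0:ℝ)..1, Hx ω (x + r * (y - x))| ≤ |y - x| * (M * |1 - 0|) :=
          mul_le_mul_of_nonneg_left hIb (abs_nonneg _)
      _ = M * |y - x| := by norm_num; ring
  -- the slope functions
  set Q21 : Ω → ℝ := fun ω => (H ω (b₂ ω) - H ω (b₁ ω)) / (b₂ ω - b₁ ω) with hQ21
  set Q32 : Ω → ℝ := fun ω => (H ω (b₃ ω) - H ω (b₂ ω)) / (b₃ ω - b₂ ω) with hQ32
  set Q31 : Ω → ℝ := fun ω => (H ω (b₃ ω) - H ω (b₁ ω)) / (b₃ ω - b₁ ω) with hQ31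
  have hord21 : ∀ᵐ ω ∂m, b₁ ω < b₂ ω := hord.mono fun ω h => h.1
  have hord32 : ∀ᵐ ω ∂m, b₂ ω < b₃ ω := hord.mono fun ω h => h.2
  have hord31 : ∀ᵐ ω ∂m, b₁ ω < b₃ ω := hord.mono fun ω h => lt_trans h.1 h.2
  have hQ21z : ∫ ω, Q21 ω ∂m = 0 :=
    slope_integral_zero σ H m hσ hHc hprob hpres b₁ b₂ hm₁ hm₂ C hb1C hb2C he₁ he₂
      hord21 M hM0 hLip
  have hQ32z : ∫ ω, Q32 ω ∂m = 0 :=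
    slope_integral_zero σ H m hσ hHc hprob hpres b₂ b₃ hm₂ hm₃ C hb2C hb3C he₂ he₃
      hord32 M hM0 hLip
  have hQ31z : ∫ ω, Q31 ω ∂m = 0 :=
    slope_integral_zero σ H m hσ hHc hprob hpres b₁ b₃ hm₁ hm₃ C hb1C hb3C he₁ he₃
      hord31 M hM0 hLip
  -- measurability and integrability
  have hHb : ∀ b : Ω → ℝ, AEMeasurable b m → AEMeasurable (fun ω => H ω (b ω)) m :=
    fun b hb => hHc.measurable.comp_aemeasurable (aemeasurable_id.prodMk hb)
  have hHxb : ∀ b : Ω → ℝ, AEMeasurable b m → AEMeasurable (fun ω => Hx ω (b ω)) m :=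
    fun b hb => hHxc.measurable.comp_aemeasurable (aemeasurable_id.prodMk hb)
  have hp1int : Integrable (fun ω => Hx ω (b₁ ω)) m :=
    integrable_of_bound m _ (hHxb b₁ hm₁) M (fun ω => hM ω _ (hb1C ω))
  have hp2int : Integrable (fun ω => Hx ω (b₂ ω)) m :=
    integrable_of_bound m _ (hHxb b₂ hm₂) M (fun ω => hM ω _ (hb2C ω))
  have hp3int : Integrable (fun ω => Hx ω (b₃ ω)) m :=
    integrable_of_bound m _ (hHxb b₃ hm₃) M (fun ω => hM ω _ (hb3C ω))
  have hQint : ∀ (p q : Ω → ℝ), AEMeasurable p m → AEMeasurable q m →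
      (∀ ω, |p ω| ≤ C) → (∀ ω, |q ω| ≤ C) → (∀ᵐ ω ∂m, p ω < q ω) →
      Integrable (fun ω => (H ω (q ω) - H ω (p ω)) / (q ω - p ω)) m := by
    intro p q hp hq hpC hqC hpq
    apply Integrable.mono' (integrable_const M)
      (((hHb q hq).sub (hHb p hp)).div (hq.sub hp)).aestronglyMeasurable
    filter_upwards [hpq] with ω hω
    change ‖(H ω (q ω) - H ω (p ω)) / (q ω - p ω)‖ ≤ M
    rw [Real.norm_eq_abs, abs_div, div_le_iff₀ (abs_pos.mpr (sub_ne_zero.mpr (ne_of_gt hω)))]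
    exact hLip ω (p ω) (q ω) (hpC ω) (hqC ω)
  have hQ21int : Integrable Q21 m := hQint b₁ b₂ hm₁ hm₂ hb1C hb2C hord21
  have hQ32int : Integrable Q32 m := hQint b₂ b₃ hm₂ hm₃ hb2C hb3C hord32
  have hQ31int : Integrable Q31 m := hQint b₁ b₃ hm₁ hm₃ hb1C hb3C hord31
  -- a.e. concavity
  have hHxωcont : ∀ x : ℝ, Continuous fun ω => Hx ω x := fun x =>
    hHxc.comp (continuous_id.prodMk continuous_const)
  have hconc_closed : IsClosed {ω | ConcaveFn (Hx ω)} := by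
    have hrw : {ω | ConcaveFn (Hx ω)} = ⋂ (x₁ : ℝ), ⋂ (x₂ : ℝ), ⋂ (α : ℝ), ⋂ (_ : 0 ≤ α),
        ⋂ (_ : α ≤ 1),
        {ω | α * Hx ω x₁ + (1 - α) * Hx ω x₂ ≤ Hx ω (α * x₁ + (1 - α) * x₂)} := by
      ext ω; simp [ConcaveFn, Set.mem_iInter]
    rw [hrw]
    refine isClosed_iInter fun x₁ => isClosed_iInter fun x₂ => isClosed_iInter fun α =>
      isClosed_iInter fun _ => isClosed_iInter fun _ => isClosed_le ?_ ?_
    · exact (continuous_const.mul (hHxωcont x₁)).add (continuous_const.mul (hHxωcont x₂))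
    · exact hHxωcont _
  have hconc_ae : ∀ᵐ ω ∂m, ConcaveFn (Hx ω) := by
    rw [ae_iff]
    have : {ω | ¬ ConcaveFn (Hx ω)} = {ω | ConcaveFn (Hx ω)}ᶜ := rfl
    rw [this, measure_compl hconc_closed.measurableSet (measure_ne_top m _), hconcm,
      measure_univ, tsub_self]
  -- the deficiency function
  set T : Ω → ℝ := fun ω => Hx ω (b₂ ω) - (Q21 ω + Q32 ω - Q31 ω) with hT
  have hTkey : ∀ ω, b₁ ω < b₂ ω → b₂ ω < b₃ ω → ConcaveFn (Hx ω) →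
      (0 ≤ T ω ∧ (Hxx ω (b₃ ω) < Hxx ω (b₁ ω) → 0 < T ω)) := by
    intro ω h12 h23 hc
    obtain ⟨k1, k2⟩ := key_div (Hx ω) (H ω) (hder ω) (gcont ω) hc h12 h23
    constructor
    · simp only [hT, hQ21, hQ32, hQ31]
      linarith [k1]
    · intro hgap
      simp only [hT, hQ21, hQ32, hQ31]
      linarith [k2 (Hxx ω (b₁ ω)) (Hxx ω (b₃ ω)) (hder2 ω (b₁ ω)) (hder2 ω (b₃ ω)) hgap]
  have hTint : Integrable T m :=
    hp2int.sub ((hQ21int.add hQ32int).sub hQ31int)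

  have hTnn_ae : 0 ≤ᵐ[m] T := by
    filter_upwards [hord, hconc_ae] with ω h1 h2
    exact (hTkey ω h1.1 h1.2 h2).1
  have hTpos_int : 0 < ∫ ω, T ω ∂m := by
    rcases (integral_nonneg_of_ae hTnn_ae).lt_or_eq with h | h
    · exact h
    · exfalso
      have hT0 : T =ᵐ[m] 0 := (integral_eq_zero_iff_of_nonneg_ae hTnn_ae hTint).mp h.symm
      have hnever : ∀ᵐ ω ∂m, ¬ (Hxx ω (b₃ ω) < Hxx ω (b₁ ω)) := by
        filter_upwards [hord, hconc_ae, hT0] with ω h1 h2 h3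
        intro hlt
        have := (hTkey ω h1.1 h1.2 h2).2 hlt
        rw [Pi.zero_apply] at h3
        linarith [h3 ▸ this]
      have := ae_iff.mp hnever
      simp only [not_not] at this
      exact absurd this (ne_of_gt hS)
  -- conclusion for λ₂
  have hcomb : Integrable (fun ω => Q21 ω + Q32 ω - Q31 ω) m :=
    (hQ21int.add hQ32int).sub hQ31int
  have hQsum : Integrable (fun ω => Q21 ω + Q32 ω) m := hQ21int.add hQ32int
  have hcombz : ∫ ω, (Q21 ω + Q32 ω - Q31 ω) ∂m = 0 := by
    rw [integral_sub hQsum hQ31int, integral_add hQ21int hQ32int, hQ21z, hQ32z, hQ31z]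
    ring
  have hTval : ∫ ω, T ω ∂m = ∫ ω, Hx ω (b₂ ω) ∂m := by
    simp only [hT]
    rw [integral_sub hp2int hcomb, hcombz, sub_zero]
  have hl2 : 0 < ∫ ω, Hx ω (b₂ ω) ∂m := hTval ▸ hTpos_int
  refine ⟨hl2, ?_, ?_⟩
  · have hae12 : ∀ᵐ ω ∂m, Hx ω (b₁ ω) + Hx ω (b₂ ω) ≤ 2 * Q21 ω := by
      filter_upwards [hord21, hconc_ae] with ω h1 h2
      simpa only [hQ21] using hh_lower (Hx ω) (H ω) (hder ω) (gcont ω) h2 h1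
    have h12 : ∫ ω, (Hx ω (b₁ ω) + Hx ω (b₂ ω)) ∂m ≤ ∫ ω, 2 * Q21 ω ∂m :=
      integral_mono_ae (hp1int.add hp2int) (hQ21int.const_mul 2) hae12
    rw [integral_add hp1int hp2int, integral_const_mul, hQ21z, mul_zero] at h12
    linarith
  · have hae23 : ∀ᵐ ω ∂m, Hx ω (b₂ ω) + Hx ω (b₃ ω) ≤ 2 * Q32 ω := by
      filter_upwards [hord32, hconc_ae] with ω h1 h2
      simpa only [hQ32] using hh_lower (Hx ω) (H ω) (hder ω) (gcont ω) h2 h1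
    have h23 : ∫ ω, (Hx ω (b₂ ω) + Hx ω (b₃ ω)) ∂m ≤ ∫ ω, 2 * Q32 ω ∂m :=
      integral_mono_ae (hp2int.add hp3int) (hQ32int.const_mul 2) hae23
    rw [integral_add hp2int hp3int, integral_const_mul, hQ32z, mul_zero] at h23
    linarith

end triple

/-- Three ordered bounded measurable equilibria for a d-concave skew-product flow produce
Lyapunov exponents with signs `-,+,-`; in particular there are at most three bounded
measurable equilibria strictly ordered almost everywhere. -/
theorem stmt17 {Ω : Type*} [MetricSpace Ω] [CompactSpace Ω]
    [MeasurableSpace Ω] [BorelSpace Ω]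
    (σ : ℝ → Ω → Ω) (hσ : IsFlow σ)
    (H Hx Hxx : Ω → ℝ → ℝ)
    (hHc : Continuous fun p : Ω × ℝ => H p.1 p.2)
    (hHxc : Continuous fun p : Ω × ℝ => Hx p.1 p.2)
    (hHxxc : Continuous fun p : Ω × ℝ => Hxx p.1 p.2)
    (hder : ∀ ω x, HasDerivAt (H ω) (Hx ω x) x)
    (hder2 : ∀ ω x, HasDerivAt (Hx ω) (Hxx ω x) x)
    (m : MeasureTheory.Measure Ω) (herg : IsErgodicMeas σ m) :
    (∀ b₁ b₂ b₃ : Ω → ℝ,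
      AEMeasurable b₁ m → AEMeasurable b₂ m → AEMeasurable b₃ m →
      (∃ C, ∀ ω, |b₁ ω| ≤ C) → (∃ C, ∀ ω, |b₂ ω| ≤ C) → (∃ C, ∀ ω, |b₃ ω| ≤ C) →
      IsEquilibrium σ H b₁ → IsEquilibrium σ H b₂ → IsEquilibrium σ H b₃ →
      (∀ᵐ ω ∂m, b₁ ω < b₂ ω ∧ b₂ ω < b₃ ω) →
      m {ω | ConcaveFn (Hx ω)} = 1 →
      0 < m {ω | Hxx ω (b₃ ω) < Hxx ω (b₁ ω)} →
      (0 < ∫ ω, Hx ω (b₂ ω) ∂m) ∧ (∫ ω, Hx ω (b₁ ω) ∂m) < 0 ∧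
        (∫ ω, Hx ω (b₃ ω) ∂m) < 0) ∧
    (m {ω | ConcaveFn (Hx ω)} = 1 →
      (∀ c₁ c₂ c₃ : Ω → ℝ,
        AEMeasurable c₁ m → AEMeasurable c₂ m → AEMeasurable c₃ m →
        (∃ C, ∀ ω, |c₁ ω| ≤ C) → (∃ C, ∀ ω, |c₂ ω| ≤ C) → (∃ C, ∀ ω, |c₃ ω| ≤ C) →
        IsEquilibrium σ H c₁ → IsEquilibrium σ H c₂ → IsEquilibrium σ H c₃ →
        (∀ᵐ ω ∂m, c₁ ω < c₂ ω ∧ c₂ ω < c₃ ω) →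
        0 < m {ω | Hxx ω (c₃ ω) < Hxx ω (c₁ ω)}) →
      ¬ ∃ c₁ c₂ c₃ c₄ : Ω → ℝ,
          AEMeasurable c₁ m ∧ AEMeasurable c₂ m ∧ AEMeasurable c₃ m ∧ AEMeasurable c₄ m ∧
          (∃ C, ∀ ω, |c₁ ω| ≤ C) ∧ (∃ C, ∀ ω, |c₂ ω| ≤ C) ∧
          (∃ C, ∀ ω, |c₃ ω| ≤ C) ∧ (∃ C, ∀ ω, |c₄ ω| ≤ C) ∧
          IsEquilibrium σ H c₁ ∧ IsEquilibrium σ H c₂ ∧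
          IsEquilibrium σ H c₃ ∧ IsEquilibrium σ H c₄ ∧
          (∀ᵐ ω ∂m, c₁ ω < c₂ ω ∧ c₂ ω < c₃ ω ∧ c₃ ω < c₄ ω)) := by
  constructor
  · intro b₁ b₂ b₃ hm₁ hm₂ hm₃ hb₁ hb₂ hb₃ he₁ he₂ he₃ hord hconcm hS
    exact triple_lemma σ hσ H Hx Hxx hHc hHxc hder hder2 m herg b₁ b₂ b₃ hm₁ hm₂ hm₃
      hb₁ hb₂ hb₃ he₁ he₂ he₃ hord hconcm hS
  · rintro hconcm hyp ⟨c₁, c₂, c₃, c₄, h₁, h₂, h₃, h₄, hB₁, hB₂, hB₃, hB₄,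
      hE₁, hE₂, hE₃, hE₄, hord4⟩
    have hord123 : ∀ᵐ ω ∂m, c₁ ω < c₂ ω ∧ c₂ ω < c₃ ω :=
      hord4.mono fun ω h => ⟨h.1, h.2.1⟩
    have hord234 : ∀ᵐ ω ∂m, c₂ ω < c₃ ω ∧ c₃ ω < c₄ ω :=
      hord4.mono fun ω h => ⟨h.2.1, h.2.2⟩
    have hS123 := hyp c₁ c₂ c₃ h₁ h₂ h₃ hB₁ hB₂ hB₃ hE₁ hE₂ hE₃ hord123
    have hS234 := hyp c₂ c₃ c₄ h₂ h₃ h₄ hB₂ hB₃ hB₄ hE₂ hE₃ hE₄ hord234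
    have t1 := triple_lemma σ hσ H Hx Hxx hHc hHxc hder hder2 m herg c₁ c₂ c₃ h₁ h₂ h₃
      hB₁ hB₂ hB₃ hE₁ hE₂ hE₃ hord123 hconcm hS123
    have t2 := triple_lemma σ hσ H Hx Hxx hHc hHxc hder hder2 m herg c₂ c₃ c₄ h₂ h₃ h₄
      hB₂ hB₃ hB₄ hE₂ hE₃ hE₄ hord234 hconcm hS234
    linarith [t1.2.2, t2.1]
end
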